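/- arXiv:2301.10519 — 2 statements merged into one kernel-verified Lean document; each statement's English description precedes it below -/
import Mathlib

section
/- (Büchi–Elgot–Trakhtenbrot) A language L ⊆ Σ⁺ over a finite alphabet Σ is regular if, and only if, there exists an MSO sentence φ over Σ such that L = L(φ). -/
/-- Formulas of monadic second-order logic of order (MSO) over alphabet `α`.
First-order and second-order (set) variables are represented by naturals. -/
inductive MSO (α : Type) : Type
  | char : α → ℕ → MSO α          -- `a(x)`
  | mem : ℕ → ℕ → MSO α           -- `X(x)` : `mem X x`
  | lt : ℕ → ℕ → MSO α            -- `x < y`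
  | not : MSO α → MSO α
  | or : MSO α → MSO α → MSO α
  | ex1 : ℕ → MSO α → MSO α       -- `∃ x. φ`
  | ex2 : ℕ → MSO α → MSO α       -- `∃ X. φ`

namespace MSO

/-- Satisfaction of an MSO formula over a string `w` with first-order
assignment `ν₁` (positions) and second-order assignment `ν₂` (sets of positions). -/
def Sat {α : Type} (w : List α) : (ℕ → ℕ) → (ℕ → Set ℕ) → MSO α → Prop
  | ν₁, _, .char a x => w[ν₁ x]? = some a
  | ν₁, ν₂, .mem X x => ν₁ x ∈ ν₂ X
  | ν₁, _, .lt x y => ν₁ x < ν₁ y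
  | ν₁, ν₂, .not φ => ¬ Sat w ν₁ ν₂ φ
  | ν₁, ν₂, .or φ ψ => Sat w ν₁ ν₂ φ ∨ Sat w ν₁ ν₂ ψ
  | ν₁, ν₂, .ex1 x φ => ∃ i < w.length, Sat w (Function.update ν₁ x i) ν₂ φ
  | ν₁, ν₂, .ex2 X φ =>
      ∃ S : Set ℕ, (∀ i ∈ S, i < w.length) ∧ Sat w ν₁ (Function.update ν₂ X S) φ

/-- Free first-order variables of an MSO formula. -/
def fv1 {α : Type} : MSO α → Finset ℕ
  | .char _ x => {x}
  | .mem _ x => {x}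
  | .lt x y => {x, y}
  | .not φ => fv1 φ
  | .or φ ψ => fv1 φ ∪ fv1 ψ
  | .ex1 x φ => fv1 φ \ {x}
  | .ex2 _ φ => fv1 φ

/-- Free second-order variables of an MSO formula. -/
def fv2 {α : Type} : MSO α → Finset ℕ
  | .char _ _ => ∅
  | .mem X _ => {X}
  | .lt _ _ => ∅
  | .not φ => fv2 φ
  | .or φ ψ => fv2 φ ∪ fv2 ψ
  | .ex1 _ φ => fv2 φ
  | .ex2 X φ => fv2 φ \ {X}

/-- The language of nonempty strings defined by an MSO formula
(intended to be used with sentences). -/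
def Lang {α : Type} (φ : MSO α) : Set (List α) :=
  {w | w ≠ [] ∧ Sat w (fun _ => 0) (fun _ => ∅) φ}

/-- A language (of nonempty strings) is MSO-definable iff it is the language
of some MSO sentence (closed formula). -/
def Definable {α : Type} (L : Set (List α)) : Prop :=
  ∃ φ : MSO α, φ.fv1 = ∅ ∧ φ.fv2 = ∅ ∧ L = Lang φ

end MSO

set_option linter.unusedSectionVars false

namespace BET

/-- Regularity with states in `Type 0`. -/
def Reg {α : Type} (L : Set (List α)) : Prop :=
  ∃ (σ : Type) (_ : Fintype σ) (A : DFA α σ), L = A.accepts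

variable {α : Type}

private def prodDFA {σ τ : Type} (A : DFA α σ) (B : DFA α τ)
    (acc : Set (σ × τ)) : DFA α (σ × τ) :=
  ⟨fun p a => (A.step p.1 a, B.step p.2 a), (A.start, B.start), acc⟩

private theorem prodDFA_eval {σ τ : Type} (A : DFA α σ) (B : DFA α τ)
    (acc : Set (σ × τ)) (w : List α) :
    ∀ (s : σ) (t : τ),
      (prodDFA A B acc).evalFrom (s, t) w = (A.evalFrom s w, B.evalFrom t w) := by
  induction w with
  | nil => intro s t; rfl
  | cons a w ih => intro s t; exact ih _ _

theorem mem_accepts' {β σ : Type} (M : DFA β σ) (x : List β) :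
    @Membership.mem (List β) (Set (List β)) _ M.accepts x ↔ M.eval x ∈ M.accept := Iff.rfl

theorem reg_compl_inter {L M : Set (List α)} (hL : Reg L) (hM : Reg M) :
    Reg (L ∩ Mᶜ) := by
  obtain ⟨σ, i1, A, rfl⟩ := hL
  obtain ⟨τ, i2, B, rfl⟩ := hM
  refine ⟨σ × τ, inferInstance, prodDFA A B {p | p.1 ∈ A.accept ∧ p.2 ∉ B.accept}, ?_⟩
  ext w
  show w ∈ A.accepts ∧ ¬ w ∈ B.accepts ↔ w ∈ (prodDFA A B {p | p.1 ∈ A.accept ∧ p.2 ∉ B.accept}).accepts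
  rw [DFA.mem_accepts, DFA.mem_accepts,
    DFA.mem_accepts, DFA.eval, DFA.eval, DFA.eval]
  show _ ↔ (prodDFA A B _).evalFrom ((A.start, B.start) : σ × τ) w ∈ _
  rw [prodDFA_eval]
  exact Iff.rfl

theorem reg_union {L M : Set (List α)} (hL : Reg L) (hM : Reg M) :
    Reg (L ∪ M) := by
  obtain ⟨σ, i1, A, rfl⟩ := hL
  obtain ⟨τ, i2, B, rfl⟩ := hM
  refine ⟨σ × τ, inferInstance, prodDFA A B {p | p.1 ∈ A.accept ∨ p.2 ∈ B.accept}, ?_⟩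
  ext w
  show w ∈ A.accepts ∨ w ∈ B.accepts ↔ w ∈ (prodDFA A B {p | p.1 ∈ A.accept ∨ p.2 ∈ B.accept}).accepts
  rw [DFA.mem_accepts, DFA.mem_accepts, DFA.mem_accepts,
    DFA.eval, DFA.eval, DFA.eval]
  show _ ↔ (prodDFA A B _).evalFrom ((A.start, B.start) : σ × τ) w ∈ _
  rw [prodDFA_eval]
  exact Iff.rfl

theorem reg_inter {L M : Set (List α)} (hL : Reg L) (hM : Reg M) :
    Reg (L ∩ M) := by
  have h : L ∩ M = L ∩ (Mᶜ)ᶜ := by simp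
  rw [h]
  refine reg_compl_inter hL ?_
  obtain ⟨τ, i2, B, rfl⟩ := hM
  refine ⟨τ, i2, ⟨B.step, B.start, B.acceptᶜ⟩, ?_⟩
  ext w
  show ¬ w ∈ B.accepts ↔ w ∈ (⟨B.step, B.start, B.acceptᶜ⟩ : DFA α τ).accepts
  rw [DFA.mem_accepts, DFA.mem_accepts]
  exact Iff.rfl

/-- A DFA whose `eval` coincides with a given function. -/
theorem eval_eq_of {σ : Type} (A : DFA α σ) (f : List α → σ)
    (h0 : f [] = A.start) (hstep : ∀ w a, f (w ++ [a]) = A.step (f w) a) :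
    ∀ w, A.eval w = f w := by
  intro w
  induction w using List.reverseRecOn with
  | nil => simpa [DFA.eval] using h0.symm
  | append_singleton w a ih => rw [DFA.eval_append_singleton, ih, hstep]

private theorem nfa_evalFrom_biUnion {Γ σ : Type} (N : NFA Γ σ) (w : List Γ) :
    ∀ S : Set σ, N.evalFrom S w = ⋃ s ∈ S, N.evalFrom {s} w := by
  induction w with
  | nil => intro S; simp [NFA.evalFrom]
  | cons b w ih =>
    intro S
    have e1 : N.evalFrom S (b :: w) = N.evalFrom (N.stepSet S b) w := rfl
    rw [e1, ih (N.stepSet S b)]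
    ext u
    simp only [Set.mem_iUnion]
    constructor
    · rintro ⟨s', hs', hu⟩
      rcases NFA.mem_stepSet.mp hs' with ⟨s0, hs0, hstep⟩
      refine ⟨s0, hs0, ?_⟩
      have e2 : N.evalFrom {s0} (b :: w) = N.evalFrom (N.stepSet {s0} b) w := rfl
      rw [e2, ih (N.stepSet {s0} b)]
      simp only [Set.mem_iUnion]
      exact ⟨s', NFA.mem_stepSet.mpr ⟨s0, rfl, hstep⟩, hu⟩
    · rintro ⟨s0, hs0, hu⟩
      have e2 : N.evalFrom {s0} (b :: w) = N.evalFrom (N.stepSet {s0} b) w := rfl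
      rw [e2, ih (N.stepSet {s0} b)] at hu
      simp only [Set.mem_iUnion] at hu
      rcases hu with ⟨s', hs', hu⟩
      rcases NFA.mem_stepSet.mp hs' with ⟨s1, hs1, hstep⟩
      have hs1' : s1 = s0 := hs1
      exact ⟨s', NFA.mem_stepSet.mpr ⟨s0, hs0, hs1' ▸ hstep⟩, hu⟩

/-- Key lemma: NFA simulating a DFA up to a letterwise relation. -/
theorem reg_rel_image {Γ : Type} {σ : Type} [Fintype σ] (A : DFA Γ σ) (R : Γ → Γ → Prop) :
    Reg {w : List Γ | ∃ w', List.Forall₂ R w w' ∧ w' ∈ A.accepts} := by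
  classical
  set N : NFA Γ σ := ⟨fun s l => {t | ∃ l', R l l' ∧ t = A.step s l'}, {A.start}, A.accept⟩
    with hN
  have key : ∀ (w : List Γ) (s : σ),
      N.evalFrom {s} w = {t | ∃ w', List.Forall₂ R w w' ∧ t = A.evalFrom s w'} := by
    intro w
    induction w with
    | nil =>
      intro s; ext t
      simp only [NFA.evalFrom, List.foldl_nil, Set.mem_singleton_iff, Set.mem_setOf_eq,
        List.forall₂_nil_left_iff]
      constructor
      · rintro rfl; exact ⟨[], rfl, rfl⟩
      · rintro ⟨w', rfl, rfl⟩; rfl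
    | cons l w ih =>
      intro s
      have h1 : N.evalFrom {s} (l :: w) = N.evalFrom (N.stepSet {s} l) w := rfl
      have h2 : N.stepSet {s} l = {t | ∃ l', R l l' ∧ t = A.step s l'} := by
        ext t
        rw [NFA.mem_stepSet]
        constructor
        · rintro ⟨s0, hs0, hstep⟩
          have : s0 = s := hs0
          exact this ▸ hstep
        · intro h; exact ⟨s, rfl, h⟩
      rw [h1, h2, nfa_evalFrom_biUnion]
      ext t
      simp only [Set.mem_iUnion, Set.mem_setOf_eq]
      constructor
      · rintro ⟨s', ⟨l', hR, rfl⟩, ht⟩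
        rw [ih] at ht
        rcases ht with ⟨w', hw', rfl⟩
        exact ⟨l' :: w', List.Forall₂.cons hR hw',
          by simp [DFA.evalFrom, List.foldl_cons]⟩
      · rintro ⟨w', hw', rfl⟩
        rcases List.forall₂_cons_left_iff.mp hw' with ⟨l', w'', hR, hw'', rfl⟩
        refine ⟨A.step s l', ⟨l', hR, rfl⟩, ?_⟩
        rw [ih]
        exact ⟨w'', hw'', by simp [DFA.evalFrom, List.foldl_cons]⟩
  refine ⟨Set σ, inferInstance, N.toDFA, ?_⟩
  rw [NFA.toDFA_correct]
  ext w
  change _ ↔ w ∈ N.accepts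
  rw [NFA.mem_accepts]
  have hst : N.start = {A.start} := rfl
  rw [hst, key]
  constructor
  · rintro ⟨w', hw', hacc⟩
    exact ⟨A.evalFrom A.start w', (DFA.mem_accepts A).mp hacc, w', hw', rfl⟩
  · rintro ⟨t, ht, w', hw', rfl⟩
    exact ⟨w', hw', (DFA.mem_accepts A).mpr ht⟩

end BET

namespace BET
variable {α : Type} {n : ℕ}

/-- Extended alphabet: a letter plus marks for `n` first-order and `n` second-order variables. -/
abbrev Gam (α : Type) (n : ℕ) : Type := α × (Fin n → Prop) × (Fin n → Prop)

def m1 (w : List (Gam α n)) (v : Fin n) : Set ℕ := {i | ∃ hi : i < w.length, (w[i]'hi).2.1 v}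
def m2 (w : List (Gam α n)) (v : Fin n) : Set ℕ := {i | ∃ hi : i < w.length, (w[i]'hi).2.2 v}

def WF (w : List (Gam α n)) : Prop := ∀ v : Fin n, ∃! i, i ∈ m1 w v

noncomputable def as1 (w : List (Gam α n)) (v : ℕ) : ℕ :=
  if h : v < n then sInf (m1 w ⟨v, h⟩) else 0

def as2 (w : List (Gam α n)) (V : ℕ) : Set ℕ :=
  if h : V < n then m2 w ⟨V, h⟩ else ∅

theorem mem_m1 {w : List (Gam α n)} {v : Fin n} {i : ℕ} (h : i ∈ m1 w v) : i < w.length :=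
  h.1

theorem mem_m2 {w : List (Gam α n)} {v : Fin n} {i : ℕ} (h : i ∈ m2 w v) : i < w.length :=
  h.1

theorem m1_append_singleton (w : List (Gam α n)) (l : Gam α n) (v : Fin n) :
    m1 (w ++ [l]) v = m1 w v ∪ {i | i = w.length ∧ l.2.1 v} := by
  ext i
  simp only [m1, Set.mem_setOf_eq, Set.mem_union, List.length_append, List.length_singleton]
  constructor
  · rintro ⟨hi, h⟩
    rcases lt_or_ge i w.length with hlt | hge
    · left
      refine ⟨hlt, ?_⟩
      rwa [List.getElem_append_left hlt] at h
    · right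
      have : i = w.length := by omega
      subst this
      refine ⟨rfl, ?_⟩
      rwa [List.getElem_concat_length (l := w) (a := l) rfl] at h
  · rintro (⟨hi, h⟩ | ⟨rfl, h⟩)
    · exact ⟨by omega, by rwa [List.getElem_append_left hi]⟩
    · exact ⟨by omega, by rwa [List.getElem_concat_length (l := w) (a := l) rfl]⟩

theorem m2_append_singleton (w : List (Gam α n)) (l : Gam α n) (v : Fin n) :
    m2 (w ++ [l]) v = m2 w v ∪ {i | i = w.length ∧ l.2.2 v} := by
  ext i
  simp only [m2, Set.mem_setOf_eq, Set.mem_union, List.length_append, List.length_singleton]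
  constructor
  · rintro ⟨hi, h⟩
    rcases lt_or_ge i w.length with hlt | hge
    · left
      refine ⟨hlt, ?_⟩
      rwa [List.getElem_append_left hlt] at h
    · right
      have : i = w.length := by omega
      subst this
      refine ⟨rfl, ?_⟩
      rwa [List.getElem_concat_length (l := w) (a := l) rfl] at h
  · rintro (⟨hi, h⟩ | ⟨rfl, h⟩)
    · exact ⟨by omega, by rwa [List.getElem_append_left hi]⟩
    · exact ⟨by omega, by rwa [List.getElem_concat_length (l := w) (a := l) rfl]⟩

theorem m1_nil (v : Fin n) : m1 ([] : List (Gam α n)) v = ∅ := by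
  ext i; simp [m1]

theorem m2_nil (v : Fin n) : m2 ([] : List (Gam α n)) v = ∅ := by
  ext i; simp [m2]

/-- Under `WF`, `as1` is the unique marked position. -/
theorem as1_mem {w : List (Gam α n)} (hwf : WF w) {v : ℕ} (hv : v < n) :
    as1 w v ∈ m1 w ⟨v, hv⟩ := by
  rw [as1, dif_pos hv]
  obtain ⟨i, hi, _⟩ := hwf ⟨v, hv⟩
  exact Nat.sInf_mem ⟨i, hi⟩

theorem as1_eq {w : List (Gam α n)} (hwf : WF w) {v : ℕ} (hv : v < n) {i : ℕ}
    (hi : i ∈ m1 w ⟨v, hv⟩) : as1 w v = i := by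
  obtain ⟨j, hj, huniq⟩ := hwf ⟨v, hv⟩
  rw [huniq _ (as1_mem hwf hv), huniq _ hi]

theorem as1_lt_length {w : List (Gam α n)} (hne : w ≠ []) (hwf : WF w) (v : ℕ) :
    as1 w v < w.length := by
  by_cases h : v < n
  · exact mem_m1 (as1_mem hwf h)
  · rw [as1, dif_neg h]
    exact List.length_pos_iff.mpr hne

theorem as2_bounded (w : List (Gam α n)) (V : ℕ) : ∀ i ∈ as2 w V, i < w.length := by
  intro i hi
  rw [as2] at hi
  split at hi
  · exact mem_m2 hi
  · exact absurd hi (Set.notMem_empty i)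

end BET
namespace BET

variable {α : Type} {n : ℕ}

theorem reg_ne {β : Type} : Reg {w : List β | w ≠ []} := by
  refine ⟨Prop, inferInstance, (⟨fun _ _ => True, False, {p | p}⟩ : DFA β Prop), ?_⟩
  have key := eval_eq_of (⟨fun _ _ => True, False, {p | p}⟩ : DFA β Prop)
    (fun w => (w ≠ [] : Prop)) (by simp) (by intro w a; simp)
  ext w
  rw [Set.mem_setOf_eq, mem_accepts', key]
  exact Iff.rfl

theorem reg_all {β : Type} (P : β → Prop) : Reg {w : List β | ∀ l ∈ w, P l} := by
  refine ⟨Prop, inferInstance, (⟨fun p l => p ∧ P l, True, {p | p}⟩ : DFA β Prop), ?_⟩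
  have key := eval_eq_of (⟨fun p l => p ∧ P l, True, {p | p}⟩ : DFA β Prop)
    (fun w => ∀ l ∈ w, P l) (by simp) ?_
  · ext w
    rw [Set.mem_setOf_eq, mem_accepts', key]
    exact Iff.rfl
  · intro w a
    show (∀ l ∈ w ++ [a], P l) = ((∀ l ∈ w, P l) ∧ P a)
    apply propext
    rw [List.forall_mem_append]
    simp

theorem reg_wf : Reg {w : List (Gam α n) | WF w} := by
  classical
  set A : DFA (Gam α n) ((Fin n → Prop) × Prop) :=
    ⟨fun p l => (fun v => p.1 v ∨ l.2.1 v, p.2 ∨ ∃ v, p.1 v ∧ l.2.1 v),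
     (fun _ => False, False),
     {p | (∀ v, p.1 v) ∧ ¬ p.2}⟩ with hA
  refine ⟨(Fin n → Prop) × Prop, inferInstance, A, ?_⟩
  have key := eval_eq_of A
    (fun w => (fun v => ∃ i, i ∈ m1 w v,
      ∃ (v : Fin n) (i j : ℕ), i ∈ m1 w v ∧ j ∈ m1 w v ∧ i ≠ j)) ?h0 ?hstep
  case h0 =>
    refine Prod.ext ?_ ?_
    · funext v
      simp [m1_nil, hA]
    · show (∃ (v : Fin n) (i j : ℕ), i ∈ m1 ([] : List (Gam α n)) v ∧ _ ∧ _) = False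
      simp [m1_nil]
  case hstep =>
    intro w l
    refine Prod.ext ?_ ?_
    · funext v
      show (∃ i, i ∈ m1 (w ++ [l]) v) = ((∃ i, i ∈ m1 w v) ∨ l.2.1 v)
      rw [m1_append_singleton]
      apply propext
      constructor
      · rintro ⟨i, hi | ⟨rfl, h⟩⟩
        · exact Or.inl ⟨i, hi⟩
        · exact Or.inr h
      · rintro (⟨i, hi⟩ | h)
        · exact ⟨i, Or.inl hi⟩
        · exact ⟨w.length, Or.inr ⟨rfl, h⟩⟩
    · show (∃ (v : Fin n) (i j : ℕ), i ∈ m1 (w ++ [l]) v ∧ j ∈ m1 (w ++ [l]) v ∧ i ≠ j)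
        = (_ ∨ ∃ v, (∃ i, i ∈ m1 w v) ∧ l.2.1 v)
      apply propext
      simp only [m1_append_singleton]
      constructor
      · rintro ⟨v, i, j, hi | ⟨rfl, hm⟩, hj | ⟨rfl, hm'⟩, hne⟩
        · exact Or.inl ⟨v, i, j, hi, hj, hne⟩
        · exact Or.inr ⟨v, ⟨i, hi⟩, hm'⟩
        · exact Or.inr ⟨v, ⟨j, hj⟩, hm⟩
        · exact absurd rfl hne
      · rintro (⟨v, i, j, hi, hj, hne⟩ | ⟨v, ⟨i, hi⟩, hm⟩)
        · exact ⟨v, i, j, Or.inl hi, Or.inl hj, hne⟩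
        · exact ⟨v, i, w.length, Or.inl hi, Or.inr ⟨rfl, hm⟩, by
            have := mem_m1 hi; omega⟩
  ext w
  rw [Set.mem_setOf_eq, mem_accepts', key]
  show WF w ↔ (∀ v, ∃ i, i ∈ m1 w v) ∧ ¬ ∃ (v : Fin n) (i j : ℕ), i ∈ m1 w v ∧ j ∈ m1 w v ∧ i ≠ j
  constructor
  · intro hwf
    refine ⟨fun v => ⟨(hwf v).choose, (hwf v).choose_spec.1⟩, ?_⟩
    rintro ⟨v, i, j, hi, hj, hne⟩
    obtain ⟨k, _, huniq⟩ := hwf v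
    exact hne ((huniq _ hi).trans (huniq _ hj).symm)
  · rintro ⟨hex, hdup⟩ v
    obtain ⟨i, hi⟩ := hex v
    refine ⟨i, hi, fun j hj => ?_⟩
    by_contra hne
    exact hdup ⟨v, j, i, hj, hi, hne⟩

theorem reg_lt (x y : Fin n) :
    Reg {w : List (Gam α n) | ∃ i j : ℕ, i ∈ m1 w x ∧ j ∈ m1 w y ∧ i < j} := by
  set A : DFA (Gam α n) (Prop × Prop) :=
    ⟨fun p l => (p.1 ∨ l.2.1 x, p.2 ∨ (p.1 ∧ l.2.1 y)), (False, False), {p | p.2}⟩ with hA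
  refine ⟨Prop × Prop, inferInstance, A, ?_⟩
  have key := eval_eq_of A
    (fun w => ((∃ i, i ∈ m1 w x), ∃ i j : ℕ, i ∈ m1 w x ∧ j ∈ m1 w y ∧ i < j)) ?h0 ?hstep
  case h0 =>
    refine Prod.ext ?_ ?_ <;>
    · show _ = False
      simp [m1_nil]
  case hstep =>
    intro w l
    refine Prod.ext ?_ ?_
    · show (∃ i, i ∈ m1 (w ++ [l]) x) = ((∃ i, i ∈ m1 w x) ∨ l.2.1 x)
      rw [m1_append_singleton]
      apply propext
      constructor
      · rintro ⟨i, hi | ⟨rfl, h⟩⟩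
        · exact Or.inl ⟨i, hi⟩
        · exact Or.inr h
      · rintro (⟨i, hi⟩ | h)
        · exact ⟨i, Or.inl hi⟩
        · exact ⟨w.length, Or.inr ⟨rfl, h⟩⟩
    · show (∃ i j : ℕ, i ∈ m1 (w ++ [l]) x ∧ j ∈ m1 (w ++ [l]) y ∧ i < j)
        = ((∃ i j : ℕ, i ∈ m1 w x ∧ j ∈ m1 w y ∧ i < j) ∨ ((∃ i, i ∈ m1 w x) ∧ l.2.1 y))
      apply propext
      simp only [m1_append_singleton]
      constructor
      · rintro ⟨i, j, hi | ⟨rfl, hm⟩, hj | ⟨rfl, hm'⟩, hlt⟩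
        · exact Or.inl ⟨i, j, hi, hj, hlt⟩
        · exact Or.inr ⟨⟨i, hi⟩, hm'⟩
        · exact absurd (mem_m1 hj) (by omega)
        · omega
      · rintro (⟨i, j, hi, hj, hlt⟩ | ⟨⟨i, hi⟩, hm⟩)
        · exact ⟨i, j, Or.inl hi, Or.inl hj, hlt⟩
        · exact ⟨i, w.length, Or.inl hi, Or.inr ⟨rfl, hm⟩, mem_m1 hi⟩
  ext w
  rw [Set.mem_setOf_eq, mem_accepts', key]
  exact Iff.rfl

end BET
namespace BET
variable {α : Type} {n : ℕ}

/-- All first-order variables occurring in a formula (free or bound). -/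
def vars1 {α : Type} : MSO α → Finset ℕ
  | .char _ x => {x}
  | .mem _ x => {x}
  | .lt x y => {x, y}
  | .not φ => vars1 φ
  | .or φ ψ => vars1 φ ∪ vars1 ψ
  | .ex1 x φ => insert x (vars1 φ)
  | .ex2 _ φ => vars1 φ

/-- All second-order variables occurring in a formula (free or bound). -/
def vars2 {α : Type} : MSO α → Finset ℕ
  | .char _ _ => ∅
  | .mem X _ => {X}
  | .lt _ _ => ∅
  | .not φ => vars2 φ
  | .or φ ψ => vars2 φ ∪ vars2 ψ
  | .ex1 _ φ => vars2 φ
  | .ex2 X φ => insert X (vars2 φ)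

/-- The language over the extended alphabet corresponding to a formula. -/
def Msat (n : ℕ) (φ : MSO α) : Set (List (Gam α n)) :=
  {w | w ≠ [] ∧ WF w ∧ MSO.Sat (w.map Prod.fst) (as1 w) (as2 w) φ}

theorem mem_m1_iff {w : List (Gam α n)} {v : Fin n} {i : ℕ} (hi : i < w.length) :
    i ∈ m1 w v ↔ (w[i]'hi).2.1 v := by
  constructor
  · rintro ⟨_, h⟩; exact h
  · intro h; exact ⟨hi, h⟩

theorem mem_m2_iff {w : List (Gam α n)} {v : Fin n} {i : ℕ} (hi : i < w.length) :
    i ∈ m2 w v ↔ (w[i]'hi).2.2 v := by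
  constructor
  · rintro ⟨_, h⟩; exact h
  · intro h; exact ⟨hi, h⟩

theorem Msat_char (a : α) {x : ℕ} (hx : x < n) :
    Msat n (.char a x) =
      ({w : List (Gam α n) | w ≠ []} ∩ {w | WF w}) ∩
        {w | ∀ l ∈ w, l.2.1 ⟨x, hx⟩ → l.1 = a} := by
  ext w
  simp only [Msat, Set.mem_setOf_eq, Set.mem_inter_iff]
  constructor
  · rintro ⟨hne, hwf, hsat⟩
    refine ⟨⟨hne, hwf⟩, ?_⟩
    have hi : as1 w x < w.length := as1_lt_length hne hwf x
    have hs : (w.map Prod.fst)[as1 w x]? = some a := hsat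
    rw [List.getElem?_map, List.getElem?_eq_getElem hi] at hs
    simp only [Option.map_some, Option.some.injEq] at hs
    intro l hl hm
    obtain ⟨j, hj, rfl⟩ := List.mem_iff_getElem.mp hl
    have heq : as1 w x = j := as1_eq hwf hx ⟨hj, hm⟩
    have h2 : w[as1 w x]? = w[j]? := by rw [heq]
    rw [List.getElem?_eq_getElem hi, List.getElem?_eq_getElem hj] at h2
    have h3 : w[as1 w x] = w[j] := by injection h2
    rw [← h3]
    exact hs
  · rintro ⟨⟨hne, hwf⟩, hall⟩
    refine ⟨hne, hwf, ?_⟩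
    have hi : as1 w x < w.length := as1_lt_length hne hwf x
    show (w.map Prod.fst)[as1 w x]? = some a
    rw [List.getElem?_map, List.getElem?_eq_getElem hi]
    simp only [Option.map_some, Option.some.injEq]
    exact hall _ (List.getElem_mem _) (as1_mem hwf hx).2

theorem Msat_mem {X x : ℕ} (hX : X < n) (hx : x < n) :
    Msat (α := α) n (.mem X x) =
      ({w : List (Gam α n) | w ≠ []} ∩ {w | WF w}) ∩
        {w | ∀ l ∈ w, l.2.1 ⟨x, hx⟩ → l.2.2 ⟨X, hX⟩} := by
  ext w
  simp only [Msat, Set.mem_setOf_eq, Set.mem_inter_iff]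
  constructor
  · rintro ⟨hne, hwf, hsat⟩
    refine ⟨⟨hne, hwf⟩, ?_⟩
    have hs : as1 w x ∈ as2 w X := hsat
    rw [as2, dif_pos hX] at hs
    intro l hl hm
    obtain ⟨j, hj, rfl⟩ := List.mem_iff_getElem.mp hl
    have heq : as1 w x = j := as1_eq hwf hx ⟨hj, hm⟩
    have h2 : w[as1 w x]? = w[j]? := by rw [heq]
    rw [List.getElem?_eq_getElem (as1_lt_length hne hwf x), List.getElem?_eq_getElem hj] at h2
    have h3 : w[as1 w x] = w[j] := by injection h2
    rw [← h3]
    exact hs.2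
  · rintro ⟨⟨hne, hwf⟩, hall⟩
    refine ⟨hne, hwf, ?_⟩
    show as1 w x ∈ as2 w X
    rw [as2, dif_pos hX]
    have hi : as1 w x < w.length := as1_lt_length hne hwf x
    exact ⟨hi, hall _ (List.getElem_mem _) (as1_mem hwf hx).2⟩

theorem Msat_lt {x y : ℕ} (hx : x < n) (hy : y < n) :
    Msat (α := α) n (.lt x y) =
      ({w : List (Gam α n) | w ≠ []} ∩ {w | WF w}) ∩
        {w | ∃ i j : ℕ, i ∈ m1 w ⟨x, hx⟩ ∧ j ∈ m1 w ⟨y, hy⟩ ∧ i < j} := by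
  ext w
  simp only [Msat, Set.mem_setOf_eq, Set.mem_inter_iff]
  constructor
  · rintro ⟨hne, hwf, hsat⟩
    have hs : as1 w x < as1 w y := hsat
    exact ⟨⟨hne, hwf⟩, as1 w x, as1 w y, as1_mem hwf hx, as1_mem hwf hy, hs⟩
  · rintro ⟨⟨hne, hwf⟩, i, j, hi, hj, hlt⟩
    refine ⟨hne, hwf, ?_⟩
    show as1 w x < as1 w y
    rw [as1_eq hwf hx hi, as1_eq hwf hy hj]
    exact hlt

theorem Msat_not (φ : MSO α) :
    Msat n (.not φ) =
      ({w : List (Gam α n) | w ≠ []} ∩ {w | WF w}) ∩ (Msat n φ)ᶜ := by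
  ext w
  simp only [Msat, Set.mem_setOf_eq, Set.mem_inter_iff, Set.mem_compl_iff]
  have : MSO.Sat (w.map Prod.fst) (as1 w) (as2 w) (.not φ)
      ↔ ¬ MSO.Sat (w.map Prod.fst) (as1 w) (as2 w) φ := Iff.rfl
  rw [this]
  tauto

theorem Msat_or (φ ψ : MSO α) :
    Msat n (.or φ ψ) = Msat n φ ∪ Msat n ψ := by
  ext w
  simp only [Msat, Set.mem_setOf_eq, Set.mem_union]
  have : MSO.Sat (w.map Prod.fst) (as1 w) (as2 w) (.or φ ψ)
      ↔ MSO.Sat (w.map Prod.fst) (as1 w) (as2 w) φ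
        ∨ MSO.Sat (w.map Prod.fst) (as1 w) (as2 w) ψ := Iff.rfl
  rw [this]
  tauto

end BET
namespace BET
variable {α : Type} {n : ℕ}

/-- Letterwise relation: equal except possibly in the first-order mark of `x`. -/
def R1 (x : Fin n) (l l' : Gam α n) : Prop :=
  l.1 = l'.1 ∧ (∀ v : Fin n, v ≠ x → (l.2.1 v ↔ l'.2.1 v)) ∧ (∀ v : Fin n, l.2.2 v ↔ l'.2.2 v)

/-- Letterwise relation: equal except possibly in the second-order mark of `X`. -/
def R2 (X : Fin n) (l l' : Gam α n) : Prop :=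
  l.1 = l'.1 ∧ (∀ v : Fin n, l.2.1 v ↔ l'.2.1 v) ∧ (∀ v : Fin n, v ≠ X → (l.2.2 v ↔ l'.2.2 v))

theorem forall₂_getElem {β : Type} {R : β → β → Prop} {w w' : List β}
    (h : List.Forall₂ R w w') {i : ℕ} (hi : i < w.length) (hi' : i < w'.length) :
    R (w[i]'hi) (w'[i]'hi') := by
  rcases List.forall₂_iff_get.mp h with ⟨_, hg⟩
  exact hg i hi hi'

theorem forall₂_of_getElem {β : Type} {R : β → β → Prop} {w w' : List β}
    (hlen : w.length = w'.length)
    (h : ∀ (i : ℕ) (hi : i < w.length) (hi' : i < w'.length), R (w[i]'hi) (w'[i]'hi')) :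
    List.Forall₂ R w w' :=
  List.forall₂_iff_get.mpr ⟨hlen, h⟩

theorem map_fst_eq {R : Gam α n → Gam α n → Prop} (hR : ∀ l l', R l l' → l.1 = l'.1)
    {w w' : List (Gam α n)} (h : List.Forall₂ R w w') :
    w.map Prod.fst = w'.map Prod.fst := by
  have hlen := List.Forall₂.length_eq h
  apply List.ext_getElem (by simp [hlen])
  intro i h1 h2
  rw [List.getElem_map, List.getElem_map]
  exact hR _ _ (forall₂_getElem h _ _)

theorem m1_eq_of_R1 {x : Fin n} {w w' : List (Gam α n)} (h : List.Forall₂ (R1 x) w w')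
    {v : Fin n} (hv : v ≠ x) : m1 w v = m1 w' v := by
  have hlen := List.Forall₂.length_eq h
  ext i
  simp only [m1, Set.mem_setOf_eq]
  constructor
  · rintro ⟨hi, hm⟩
    exact ⟨hlen ▸ hi, ((forall₂_getElem h hi (hlen ▸ hi)).2.1 v hv).mp hm⟩
  · rintro ⟨hi, hm⟩
    exact ⟨hlen ▸ hi, ((forall₂_getElem h (hlen ▸ hi) hi).2.1 v hv).mpr hm⟩

theorem m2_eq_of_R1 {x : Fin n} {w w' : List (Gam α n)} (h : List.Forall₂ (R1 x) w w')
    (v : Fin n) : m2 w v = m2 w' v := by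
  have hlen := List.Forall₂.length_eq h
  ext i
  simp only [m2, Set.mem_setOf_eq]
  constructor
  · rintro ⟨hi, hm⟩
    exact ⟨hlen ▸ hi, ((forall₂_getElem h hi (hlen ▸ hi)).2.2 v).mp hm⟩
  · rintro ⟨hi, hm⟩
    exact ⟨hlen ▸ hi, ((forall₂_getElem h (hlen ▸ hi) hi).2.2 v).mpr hm⟩

theorem m1_eq_of_R2 {X : Fin n} {w w' : List (Gam α n)} (h : List.Forall₂ (R2 X) w w')
    (v : Fin n) : m1 w v = m1 w' v := by
  have hlen := List.Forall₂.length_eq h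
  ext i
  simp only [m1, Set.mem_setOf_eq]
  constructor
  · rintro ⟨hi, hm⟩
    exact ⟨hlen ▸ hi, ((forall₂_getElem h hi (hlen ▸ hi)).2.1 v).mp hm⟩
  · rintro ⟨hi, hm⟩
    exact ⟨hlen ▸ hi, ((forall₂_getElem h (hlen ▸ hi) hi).2.1 v).mpr hm⟩

theorem m2_eq_of_R2 {X : Fin n} {w w' : List (Gam α n)} (h : List.Forall₂ (R2 X) w w')
    {v : Fin n} (hv : v ≠ X) : m2 w v = m2 w' v := by
  have hlen := List.Forall₂.length_eq h
  ext i
  simp only [m2, Set.mem_setOf_eq]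
  constructor
  · rintro ⟨hi, hm⟩
    exact ⟨hlen ▸ hi, ((forall₂_getElem h hi (hlen ▸ hi)).2.2 v hv).mp hm⟩
  · rintro ⟨hi, hm⟩
    exact ⟨hlen ▸ hi, ((forall₂_getElem h (hlen ▸ hi) hi).2.2 v hv).mpr hm⟩

theorem Msat_ex1 (φ : MSO α) {x : ℕ} (hx : x < n) :
    Msat n (.ex1 x φ) =
      ({w : List (Gam α n) | w ≠ []} ∩ {w | WF w}) ∩
        {w | ∃ w', List.Forall₂ (R1 ⟨x, hx⟩) w w' ∧ w' ∈ Msat n φ} := by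
  ext w
  simp only [Msat, Set.mem_setOf_eq, Set.mem_inter_iff]
  constructor
  · rintro ⟨hne, hwf, hsat⟩
    obtain ⟨i, hilen, hsati⟩ := hsat
    rw [List.length_map] at hilen
    set w' : List (Gam α n) :=
      w.mapIdx (fun j l => (l.1, Function.update l.2.1 ⟨x, hx⟩ (j = i), l.2.2)) with hw'
    have hlen : w'.length = w.length := by simp [hw']
    have hget : ∀ (j : ℕ) (hj : j < w'.length),
        w'[j] = ((w[j]'(hlen ▸ hj)).1,
          Function.update (w[j]'(hlen ▸ hj)).2.1 ⟨x, hx⟩ (j = i), (w[j]'(hlen ▸ hj)).2.2) := by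
      intro j hj
      simp [hw', List.getElem_mapIdx]
    have hrel : List.Forall₂ (R1 ⟨x, hx⟩) w w' := by
      refine forall₂_of_getElem hlen.symm ?_
      intro j hj hj'
      rw [hget j hj']
      exact ⟨rfl, fun v hv => by simp [Function.update_of_ne hv], fun v => Iff.rfl⟩
    have hm1x : m1 w' ⟨x, hx⟩ = {i} := by
      ext j
      simp only [m1, Set.mem_setOf_eq, Set.mem_singleton_iff]
      constructor
      · rintro ⟨hj, hm⟩
        rw [hget j hj] at hm
        simpa using hm
      · rintro rfl
        refine ⟨hlen ▸ hilen, ?_⟩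
        rw [hget _ (hlen ▸ hilen)]
        simp
    have hwf' : WF w' := by
      intro v
      by_cases hv : v = ⟨x, hx⟩
      · subst hv
        rw [hm1x]
        exact ⟨i, rfl, fun j hj => hj⟩
      · rw [← m1_eq_of_R1 hrel hv]
        exact hwf v
    have has1 : as1 w' = Function.update (as1 w) x i := by
      funext v
      by_cases hvn : v < n
      · by_cases hvx : v = x
        · subst hvx
          rw [Function.update_self]
          exact as1_eq hwf' hvn (by
            rw [show (⟨v, hvn⟩ : Fin n) = ⟨v, hx⟩ from rfl, hm1x]; rfl)
        · rw [Function.update_of_ne hvx, as1, as1, dif_pos hvn, dif_pos hvn,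
            m1_eq_of_R1 hrel (by simp [Fin.ext_iff, hvx])]
      · rw [Function.update_of_ne (by omega : v ≠ x), as1, as1, dif_neg hvn, dif_neg hvn]
    have has2 : as2 w' = as2 w := by
      funext V
      by_cases hVn : V < n
      · rw [as2, as2, dif_pos hVn, dif_pos hVn, m2_eq_of_R1 hrel]
      · rw [as2, as2, dif_neg hVn, dif_neg hVn]
    refine ⟨⟨hne, hwf⟩, w', hrel, ?_, hwf', ?_⟩
    · intro hnil
      rw [hnil] at hlen
      exact hne (List.length_eq_zero_iff.mp (by simpa using hlen.symm))
    · rw [← map_fst_eq (fun l l' h => h.1) hrel, has1, has2]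
      exact hsati
  · rintro ⟨⟨hne, hwf⟩, w', hrel, hne', hwf', hsat'⟩
    refine ⟨hne, hwf, ?_⟩
    set i := as1 w' x with hi
    have hlen := List.Forall₂.length_eq hrel
    refine ⟨i, ?_, ?_⟩
    · rw [List.length_map, hlen]
      exact as1_lt_length hne' hwf' x
    · have has1 : Function.update (as1 w) x i = as1 w' := by
        funext v
        by_cases hvx : v = x
        · subst hvx
          rw [Function.update_self]
        · rw [Function.update_of_ne hvx]
          by_cases hvn : v < n
          · rw [as1, as1, dif_pos hvn, dif_pos hvn,
              m1_eq_of_R1 hrel (by simp [Fin.ext_iff, hvx])]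
          · rw [as1, as1, dif_neg hvn, dif_neg hvn]
      have has2 : as2 w = as2 w' := by
        funext V
        by_cases hVn : V < n
        · rw [as2, as2, dif_pos hVn, dif_pos hVn, m2_eq_of_R1 hrel]
        · rw [as2, as2, dif_neg hVn, dif_neg hVn]
      rw [map_fst_eq (fun l l' h => h.1) hrel, has1, has2]
      exact hsat'

theorem Msat_ex2 (φ : MSO α) {X : ℕ} (hX : X < n) :
    Msat n (.ex2 X φ) =
      ({w : List (Gam α n) | w ≠ []} ∩ {w | WF w}) ∩
        {w | ∃ w', List.Forall₂ (R2 ⟨X, hX⟩) w w' ∧ w' ∈ Msat n φ} := by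
  ext w
  simp only [Msat, Set.mem_setOf_eq, Set.mem_inter_iff]
  constructor
  · rintro ⟨hne, hwf, hsat⟩
    obtain ⟨S, hSb, hsatS⟩ := hsat
    rw [List.length_map] at hSb
    set w' : List (Gam α n) :=
      w.mapIdx (fun j l => (l.1, l.2.1, Function.update l.2.2 ⟨X, hX⟩ (j ∈ S))) with hw'
    have hlen : w'.length = w.length := by simp [hw']
    have hget : ∀ (j : ℕ) (hj : j < w'.length),
        w'[j] = ((w[j]'(hlen ▸ hj)).1, (w[j]'(hlen ▸ hj)).2.1,
          Function.update (w[j]'(hlen ▸ hj)).2.2 ⟨X, hX⟩ (j ∈ S)) := by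
      intro j hj
      simp [hw', List.getElem_mapIdx]
    have hrel : List.Forall₂ (R2 ⟨X, hX⟩) w w' := by
      refine forall₂_of_getElem hlen.symm ?_
      intro j hj hj'
      rw [hget j hj']
      exact ⟨rfl, fun v => Iff.rfl, fun v hv => by simp [Function.update_of_ne hv]⟩
    have hm2X : m2 w' ⟨X, hX⟩ = S := by
      ext j
      simp only [m2, Set.mem_setOf_eq]
      constructor
      · rintro ⟨hj, hm⟩
        rw [hget j hj] at hm
        simpa using hm
      · intro hj
        refine ⟨hlen ▸ hSb j hj, ?_⟩
        rw [hget j (hlen ▸ hSb j hj)]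
        simpa using hj
    have hwf' : WF w' := by
      intro v
      rw [← m1_eq_of_R2 hrel v]
      exact hwf v
    have has1 : as1 w' = as1 w := by
      funext v
      by_cases hvn : v < n
      · rw [as1, as1, dif_pos hvn, dif_pos hvn, m1_eq_of_R2 hrel]
      · rw [as1, as1, dif_neg hvn, dif_neg hvn]
    have has2 : as2 w' = Function.update (as2 w) X S := by
      funext V
      by_cases hVn : V < n
      · by_cases hVX : V = X
        · subst hVX
          rw [Function.update_self, as2, dif_pos hVn]
          rw [show (⟨V, hVn⟩ : Fin n) = ⟨V, hX⟩ from rfl, hm2X]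
        · rw [Function.update_of_ne hVX, as2, as2, dif_pos hVn, dif_pos hVn,
            m2_eq_of_R2 hrel (by simp [Fin.ext_iff, hVX])]
      · rw [Function.update_of_ne (by omega : V ≠ X), as2, as2, dif_neg hVn, dif_neg hVn]
    refine ⟨⟨hne, hwf⟩, w', hrel, ?_, hwf', ?_⟩
    · intro hnil
      rw [hnil] at hlen
      exact hne (List.length_eq_zero_iff.mp (by simpa using hlen.symm))
    · rw [← map_fst_eq (fun l l' h => h.1) hrel, has1, has2]
      exact hsatS
  · rintro ⟨⟨hne, hwf⟩, w', hrel, hne', hwf', hsat'⟩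
    refine ⟨hne, hwf, ?_⟩
    set S := as2 w' X with hS
    have hlen := List.Forall₂.length_eq hrel
    refine ⟨S, ?_, ?_⟩
    · intro i hi
      rw [List.length_map, hlen]
      exact as2_bounded w' X i hi
    · have has1 : as1 w = as1 w' := by
        funext v
        by_cases hvn : v < n
        · rw [as1, as1, dif_pos hvn, dif_pos hvn, m1_eq_of_R2 hrel]
        · rw [as1, as1, dif_neg hvn, dif_neg hvn]
      have has2 : Function.update (as2 w) X S = as2 w' := by
        funext V
        by_cases hVX : V = X
        · subst hVX
          rw [Function.update_self]
        · rw [Function.update_of_ne hVX]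
          by_cases hVn : V < n
          · rw [as2, as2, dif_pos hVn, dif_pos hVn,
              m2_eq_of_R2 hrel (by simp [Fin.ext_iff, hVX])]
          · rw [as2, as2, dif_neg hVn, dif_neg hVn]
      rw [map_fst_eq (fun l l' h => h.1) hrel, has1, has2]
      exact hsat'

theorem reg_rel {Γ : Type} {L : Set (List Γ)} (R : Γ → Γ → Prop) (h : Reg L) :
    Reg {w : List Γ | ∃ w', List.Forall₂ R w w' ∧ w' ∈ L} := by
  obtain ⟨σ, inst, A, rfl⟩ := h
  exact reg_rel_image A R

/-- Main induction: the encoded language of any formula with variables below `n` is regular. -/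
theorem reg_Msat (φ : MSO α) (h1 : ∀ v ∈ vars1 φ, v < n) (h2 : ∀ V ∈ vars2 φ, V < n) :
    Reg (Msat n φ) := by
  induction φ with
  | char a x =>
    have hx : x < n := h1 x (by simp [vars1])
    rw [Msat_char a hx]
    exact reg_inter (reg_inter reg_ne reg_wf) (reg_all _)
  | mem X x =>
    have hX : X < n := h2 X (by simp [vars2])
    have hx : x < n := h1 x (by simp [vars1])
    rw [Msat_mem hX hx]
    exact reg_inter (reg_inter reg_ne reg_wf) (reg_all _)
  | lt x y =>
    have hx : x < n := h1 x (by simp [vars1])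
    have hy : y < n := h1 y (by simp [vars1])
    rw [Msat_lt hx hy]
    exact reg_inter (reg_inter reg_ne reg_wf) (reg_lt _ _)
  | not φ ih =>
    rw [Msat_not]
    exact reg_compl_inter (reg_inter reg_ne reg_wf)
      (ih (fun v hv => h1 v (by simpa [vars1] using hv))
          (fun V hV => h2 V (by simpa [vars2] using hV)))
  | or φ ψ ihφ ihψ =>
    rw [Msat_or]
    exact reg_union
      (ihφ (fun v hv => h1 v (by simp [vars1]; tauto))
           (fun V hV => h2 V (by simp [vars2]; tauto)))
      (ihψ (fun v hv => h1 v (by simp [vars1]; tauto))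
           (fun V hV => h2 V (by simp [vars2]; tauto)))
  | ex1 x φ ih =>
    have hx : x < n := h1 x (by simp [vars1])
    rw [Msat_ex1 φ hx]
    refine reg_inter (reg_inter reg_ne reg_wf) (reg_rel _ ?_)
    exact ih (fun v hv => h1 v (by simp [vars1]; tauto))
      (fun V hV => h2 V (by simpa [vars2] using hV))
  | ex2 X φ ih =>
    have hX : X < n := h2 X (by simp [vars2])
    rw [Msat_ex2 φ hX]
    refine reg_inter (reg_inter reg_ne reg_wf) (reg_rel _ ?_)
    exact ih (fun v hv => h1 v (by simpa [vars1] using hv))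
      (fun V hV => h2 V (by simp [vars2]; tauto))

end BET
namespace BET
variable {α : Type}

/-- Canonical encodings: first position carries all first-order marks. -/
def e1 (n : ℕ) (a : α) : Gam α n := (a, fun _ => True, fun _ => False)
def e2 (n : ℕ) (a : α) : Gam α n := (a, fun _ => False, fun _ => False)

def menc (n : ℕ) : List α → List (Gam α n)
  | [] => []
  | a :: t => e1 n a :: t.map (e2 n)

theorem menc_map_fst (n : ℕ) (w : List α) : (menc n w).map Prod.fst = w := by
  cases w with
  | nil => rfl
  | cons a t =>
    show (a :: (t.map (e2 n)).map Prod.fst) = a :: t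
    rw [List.map_map]
    congr 1
    rw [show Prod.fst ∘ e2 n = @id α from rfl, List.map_id]

theorem menc_length (n : ℕ) (w : List α) : (menc n w).length = w.length := by
  cases w with
  | nil => rfl
  | cons a t => simp [menc]

theorem menc_m1 (n : ℕ) {w : List α} (hw : w ≠ []) (v : Fin n) :
    m1 (menc n w) v = {0} := by
  obtain ⟨a, t, rfl⟩ := List.exists_cons_of_ne_nil hw
  ext i
  simp only [m1, Set.mem_setOf_eq, Set.mem_singleton_iff]
  constructor
  · rintro ⟨hi, hm⟩
    by_contra h0
    have hi2 : i < t.length + 1 := by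
      rw [menc_length] at hi; simpa using hi
    have hi' : i - 1 < (t.map (e2 n)).length := by
      simp only [List.length_map]; omega
    have : (menc n (a :: t))[i] = (t.map (e2 n))[i - 1] := by
      show (e1 n a :: t.map (e2 n))[i] = _
      obtain ⟨k, rfl⟩ : ∃ k, i = k + 1 := ⟨i - 1, by omega⟩
      rfl
    rw [this, List.getElem_map] at hm
    exact hm
  · rintro rfl
    refine ⟨by simp [menc], ?_⟩
    show (e1 n a).2.1 v
    trivial

theorem menc_m2 (n : ℕ) (w : List α) (v : Fin n) :
    m2 (menc n w) v = ∅ := by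
  cases w with
  | nil => exact m2_nil v
  | cons a t =>
    ext i
    simp only [m2, Set.mem_setOf_eq, Set.mem_empty_iff_false, iff_false, not_exists]
    intro hi
    show ¬ _
    rcases Nat.eq_zero_or_pos i with rfl | hpos
    · intro hm
      exact hm
    · have hi' : i - 1 < (t.map (e2 n)).length := by
        rw [menc_length] at hi
        simp only [List.length_map]
        simp only [List.length_cons] at hi
        omega
      have : (menc n (a :: t))[i] = (t.map (e2 n))[i - 1] := by
        show (e1 n a :: t.map (e2 n))[i] = _
        obtain ⟨k, rfl⟩ : ∃ k, i = k + 1 := ⟨i - 1, by omega⟩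
        rfl
      rw [this, List.getElem_map]
      intro hm
      exact hm

theorem menc_wf (n : ℕ) {w : List α} (hw : w ≠ []) : WF (menc n w : List (Gam α n)) := by
  intro v
  rw [menc_m1 n hw v]
  exact ⟨0, rfl, fun j hj => hj⟩

theorem menc_as1 (n : ℕ) {w : List α} (hw : w ≠ []) :
    as1 (menc n w : List (Gam α n)) = fun _ => 0 := by
  funext v
  by_cases hv : v < n
  · rw [as1, dif_pos hv, menc_m1 n hw]
    simp
  · rw [as1, dif_neg hv]

theorem menc_as2 (n : ℕ) (w : List α) :
    as2 (menc n w : List (Gam α n)) = fun _ => ∅ := by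
  funext V
  by_cases hV : V < n
  · rw [as2, dif_pos hV, menc_m2]
  · rw [as2, dif_neg hV]

theorem menc_mem_Msat (n : ℕ) (φ : MSO α) (w : List α) :
    menc n w ∈ Msat n φ ↔ w ∈ MSO.Lang φ := by
  constructor
  · rintro ⟨hne, hwf, hsat⟩
    have hw : w ≠ [] := by
      intro h; subst h; exact hne rfl
    rw [menc_map_fst, menc_as1 n hw, menc_as2 n] at hsat
    exact ⟨hw, hsat⟩
  · rintro ⟨hw, hsat⟩
    refine ⟨?_, menc_wf n hw, ?_⟩
    · intro h
      apply hw
      have := congrArg List.length h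
      rw [menc_length] at this
      exact List.length_eq_zero_iff.mp (by simpa using this)
    · rw [menc_map_fst, menc_as1 n hw, menc_as2 n]
      exact hsat

/-- MSO-definable languages are regular. -/
theorem reg_of_lang (φ : MSO α) : Reg (MSO.Lang φ) := by
  set n : ℕ := (vars1 φ ∪ vars2 φ).sup id + 1 with hn
  have h1 : ∀ v ∈ vars1 φ, v < n := by
    intro v hv
    have := Finset.le_sup (f := id) (Finset.mem_union_left (vars2 φ) hv)
    simp only [id] at this
    omega
  have h2 : ∀ V ∈ vars2 φ, V < n := by
    intro V hV
    have := Finset.le_sup (f := id) (Finset.mem_union_right (vars1 φ) hV)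
    simp only [id] at this
    omega
  obtain ⟨σ, inst, B, hB⟩ := reg_Msat (n := n) φ h1 h2
  set C : DFA α (σ × Bool) :=
    ⟨fun p a => (B.step p.1 (cond p.2 (e1 n a) (e2 n a)), false),
     (B.start, true), {p | p.1 ∈ B.accept ∧ p.2 = false}⟩ with hC
  refine ⟨σ × Bool, inferInstance, C, ?_⟩
  have keyF : ∀ (t : List α) (s : σ), C.evalFrom (s, false) t = (B.evalFrom s (t.map (e2 n)), false) := by
    intro t
    induction t with
    | nil => intro s; rfl
    | cons a t ih =>
      intro s
      show C.evalFrom (C.step (s, false) a) t = _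
      have : C.step (s, false) a = (B.step s (e2 n a), false) := rfl
      rw [this, ih]
      rfl
  ext w
  cases w with
  | nil =>
    simp only [MSO.Lang, Set.mem_setOf_eq, ne_eq, not_true_eq_false, false_and, false_iff]
    rw [mem_accepts']
    intro h
    exact Bool.noConfusion h.2
  | cons a t =>
    rw [mem_accepts']
    have : C.eval (a :: t) = (B.evalFrom B.start (menc n (a :: t)), false) := by
      show C.evalFrom (C.step (B.start, true) a) t = _
      have h1 : C.step (B.start, true) a = (B.step B.start (e1 n a), false) := rfl
      rw [h1, keyF]
      show (B.evalFrom B.start (e1 n a :: t.map (e2 n)), false) = _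
      rfl
    rw [this]
    have : ((B.evalFrom B.start (menc n (a :: t)), false) ∈ C.accept)
        ↔ menc n (a :: t) ∈ B.accepts := by
      rw [DFA.mem_accepts]
      simp [hC, DFA.eval]
    rw [this, show menc n (a :: t) ∈ B.accepts ↔ menc n (a :: t) ∈ Msat n φ from
      Iff.of_eq (congrArg (fun X : Set (List (Gam α n)) => menc n (a :: t) ∈ X) hB.symm),
      menc_mem_Msat]

end BET
namespace BET
open MSO
variable {α : Type}

def ff : MSO α := .ex1 0 (.lt 0 0)
def tt : MSO α := .not ff
def land (φ ψ : MSO α) : MSO α := .not (.or (.not φ) (.not ψ))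
def limp (φ ψ : MSO α) : MSO α := .or (.not φ) ψ
def all1 (x : ℕ) (φ : MSO α) : MSO α := .not (.ex1 x (.not φ))
def bigOr (l : List (MSO α)) : MSO α := l.foldr .or ff
def bigAnd (l : List (MSO α)) : MSO α := .not (bigOr (l.map .not))
def ex2Block (l : List ℕ) (φ : MSO α) : MSO α := l.foldr .ex2 φ

section SatLemmas
variable {w : List α} {ν₁ : ℕ → ℕ} {ν₂ : ℕ → Set ℕ}

theorem Sat_not {φ : MSO α} : Sat w ν₁ ν₂ (.not φ) ↔ ¬ Sat w ν₁ ν₂ φ := Iff.rfl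
theorem Sat_or {φ ψ : MSO α} : Sat w ν₁ ν₂ (.or φ ψ) ↔ Sat w ν₁ ν₂ φ ∨ Sat w ν₁ ν₂ ψ := Iff.rfl

theorem Sat_ff : ¬ Sat w ν₁ ν₂ (ff : MSO α) := by
  rintro ⟨i, hi, hlt⟩
  exact lt_irrefl _ hlt

theorem Sat_tt : Sat w ν₁ ν₂ (tt : MSO α) := Sat_ff

theorem Sat_land {φ ψ : MSO α} : Sat w ν₁ ν₂ (land φ ψ) ↔ Sat w ν₁ ν₂ φ ∧ Sat w ν₁ ν₂ ψ := by
  rw [land, Sat_not, Sat_or, Sat_not, Sat_not]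
  tauto

theorem Sat_limp {φ ψ : MSO α} : Sat w ν₁ ν₂ (limp φ ψ) ↔ (Sat w ν₁ ν₂ φ → Sat w ν₁ ν₂ ψ) := by
  rw [limp, Sat_or, Sat_not]
  tauto

theorem Sat_all1 {x : ℕ} {φ : MSO α} :
    Sat w ν₁ ν₂ (all1 x φ) ↔ ∀ i < w.length, Sat w (Function.update ν₁ x i) ν₂ φ := by
  rw [all1, Sat_not]
  constructor
  · intro h i hi
    by_contra hn
    exact h ⟨i, hi, hn⟩
  · rintro h ⟨i, hi, hn⟩
    exact hn (h i hi)

theorem Sat_bigOr {l : List (MSO α)} :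
    Sat w ν₁ ν₂ (bigOr l) ↔ ∃ φ ∈ l, Sat w ν₁ ν₂ φ := by
  induction l with
  | nil =>
    simp only [bigOr, List.foldr_nil, List.not_mem_nil]
    constructor
    · intro h; exact absurd h Sat_ff
    · rintro ⟨φ, h, _⟩; exact absurd h (by simp)
  | cons ψ l ih =>
    show Sat w ν₁ ν₂ (.or ψ (bigOr l)) ↔ _
    rw [Sat_or, ih]
    simp only [List.mem_cons]
    constructor
    · rintro (h | ⟨φ, hφ, h⟩)
      · exact ⟨ψ, Or.inl rfl, h⟩
      · exact ⟨φ, Or.inr hφ, h⟩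
    · rintro ⟨φ, (rfl | hφ), h⟩
      · exact Or.inl h
      · exact Or.inr ⟨φ, hφ, h⟩

theorem Sat_bigAnd {l : List (MSO α)} :
    Sat w ν₁ ν₂ (bigAnd l) ↔ ∀ φ ∈ l, Sat w ν₁ ν₂ φ := by
  rw [bigAnd, Sat_not, Sat_bigOr]
  constructor
  · intro h φ hφ
    by_contra hn
    exact h ⟨.not φ, List.mem_map_of_mem hφ, hn⟩
  · rintro h ⟨ψ, hψ, hsat⟩
    obtain ⟨φ, hφ, rfl⟩ := List.mem_map.mp hψ
    exact hsat (h φ hφ)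

theorem Sat_ex2Block {l : List ℕ} {φ : MSO α} :
    Sat w ν₁ ν₂ (ex2Block l φ) ↔
      ∃ g : ℕ → Set ℕ, (∀ V ∈ l, ∀ i ∈ g V, i < w.length) ∧
        Sat w ν₁ (fun V => if V ∈ l then g V else ν₂ V) φ := by
  classical
  induction l generalizing ν₂ with
  | nil =>
    show Sat w ν₁ ν₂ φ ↔ _
    constructor
    · intro h
      refine ⟨fun _ => ∅, by simp, ?_⟩
      have : (fun V => if V ∈ ([] : List ℕ) then (∅ : Set ℕ) else ν₂ V) = ν₂ := by
        funext V; simp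
      rw [this]
      exact h
    · rintro ⟨g, _, h⟩
      have : (fun V => if V ∈ ([] : List ℕ) then g V else ν₂ V) = ν₂ := by
        funext V; simp
      rw [this] at h
      exact h
  | cons v l ih =>
    show Sat w ν₁ ν₂ (.ex2 v (ex2Block l φ)) ↔ _
    have hrfl : Sat w ν₁ ν₂ (.ex2 v (ex2Block l φ)) ↔
        ∃ S : Set ℕ, (∀ i ∈ S, i < w.length) ∧
          Sat w ν₁ (Function.update ν₂ v S) (ex2Block l φ) := Iff.rfl
    rw [hrfl]
    constructor
    · rintro ⟨S, hS, h⟩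
      rw [ih] at h
      obtain ⟨g, hg, h⟩ := h
      refine ⟨fun V => if V ∈ l then g V else S, ?_, ?_⟩
      · intro V hV i hi
        rcases List.mem_cons.mp hV with rfl | hVl
        · by_cases hvl : V ∈ l
          · exact hg V hvl i (by simpa [if_pos hvl] using hi)
          · exact hS i (by simpa [if_neg hvl] using hi)
        · exact hg V hVl i (by simpa [if_pos hVl] using hi)
      · have heq : (fun V => if V ∈ (v :: l) then (if V ∈ l then g V else S) else ν₂ V)
            = (fun V => if V ∈ l then g V else Function.update ν₂ v S V) := by
          funext V
          by_cases hVl : V ∈ l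
          · simp [hVl, List.mem_cons]
          · by_cases hVv : V = v
            · subst hVv
              simp [hVl]
            · simp [hVl, hVv, Function.update_of_ne hVv]
        rw [heq]
        exact h
    · rintro ⟨g, hg, h⟩
      refine ⟨g v, fun i hi => hg v (by simp) i hi, ?_⟩
      rw [ih]
      refine ⟨g, fun V hV i hi => hg V (List.mem_cons_of_mem _ hV) i hi, ?_⟩
      have heq : (fun V => if V ∈ l then g V else Function.update ν₂ v (g v) V)
          = (fun V => if V ∈ (v :: l) then g V else ν₂ V) := by
        funext V
        by_cases hVl : V ∈ l
        · simp [hVl, List.mem_cons]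
        · by_cases hVv : V = v
          · subst hVv
            simp [hVl]
          · simp [hVl, hVv, Function.update_of_ne hVv]
      rw [heq]
      exact h

end SatLemmas

section FvLemmas

theorem fv1_ff : (ff : MSO α).fv1 = ∅ := rfl
theorem fv1_tt : (tt : MSO α).fv1 = ∅ := rfl
theorem fv2_ff : (ff : MSO α).fv2 = ∅ := rfl
theorem fv2_tt : (tt : MSO α).fv2 = ∅ := rfl

theorem fv1_land {φ ψ : MSO α} : (land φ ψ).fv1 = φ.fv1 ∪ ψ.fv1 := rfl
theorem fv2_land {φ ψ : MSO α} : (land φ ψ).fv2 = φ.fv2 ∪ ψ.fv2 := rfl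
theorem fv1_limp {φ ψ : MSO α} : (limp φ ψ).fv1 = φ.fv1 ∪ ψ.fv1 := rfl
theorem fv2_limp {φ ψ : MSO α} : (limp φ ψ).fv2 = φ.fv2 ∪ ψ.fv2 := rfl

theorem fv1_bigOr_subset {l : List (MSO α)} {s : Finset ℕ}
    (h : ∀ φ ∈ l, φ.fv1 ⊆ s) : (bigOr l).fv1 ⊆ s := by
  induction l with
  | nil =>
    show (ff : MSO α).fv1 ⊆ s
    rw [fv1_ff]
    exact Finset.empty_subset s
  | cons φ l ih =>
    show (MSO.or φ (bigOr l)).fv1 ⊆ s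
    show φ.fv1 ∪ (bigOr l).fv1 ⊆ s
    exact Finset.union_subset (h φ (by simp)) (ih fun ψ hψ => h ψ (by simp [hψ]))

theorem fv2_bigOr_subset {l : List (MSO α)} {s : Finset ℕ}
    (h : ∀ φ ∈ l, φ.fv2 ⊆ s) : (bigOr l).fv2 ⊆ s := by
  induction l with
  | nil =>
    show (ff : MSO α).fv2 ⊆ s
    rw [fv2_ff]
    exact Finset.empty_subset s
  | cons φ l ih =>
    show φ.fv2 ∪ (bigOr l).fv2 ⊆ s
    exact Finset.union_subset (h φ (by simp)) (ih fun ψ hψ => h ψ (by simp [hψ]))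

theorem fv1_bigAnd_subset {l : List (MSO α)} {s : Finset ℕ}
    (h : ∀ φ ∈ l, φ.fv1 ⊆ s) : (bigAnd l).fv1 ⊆ s := by
  show (bigOr (l.map .not)).fv1 ⊆ s
  refine fv1_bigOr_subset ?_
  intro ψ hψ
  obtain ⟨φ, hφ, rfl⟩ := List.mem_map.mp hψ
  exact h φ hφ

theorem fv2_bigAnd_subset {l : List (MSO α)} {s : Finset ℕ}
    (h : ∀ φ ∈ l, φ.fv2 ⊆ s) : (bigAnd l).fv2 ⊆ s := by
  show (bigOr (l.map .not)).fv2 ⊆ s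
  refine fv2_bigOr_subset ?_
  intro ψ hψ
  obtain ⟨φ, hφ, rfl⟩ := List.mem_map.mp hψ
  exact h φ hφ

theorem fv1_ex2Block {l : List ℕ} {φ : MSO α} : (ex2Block l φ).fv1 = φ.fv1 := by
  induction l with
  | nil => rfl
  | cons v l ih => show (ex2Block l φ).fv1 = _; exact ih

theorem mem_fv2_ex2Block {l : List ℕ} {φ : MSO α} {V : ℕ} :
    V ∈ (ex2Block l φ).fv2 ↔ V ∈ φ.fv2 ∧ V ∉ l := by
  induction l with
  | nil => simp [ex2Block]
  | cons v l ih =>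
    show V ∈ (ex2Block l φ).fv2 \ {v} ↔ _
    rw [Finset.mem_sdiff, ih]
    simp only [Finset.mem_singleton, List.mem_cons]
    tauto

end FvLemmas
end BET
namespace BET
open MSO

section Forward
variable {α : Type} [Fintype α] {σ : Type} [Fintype σ]

/-- The second-order variable associated to a state. -/
noncomputable def svar (q : σ) : ℕ := (Fintype.equivFin σ q : ℕ)

theorem svar_lt (q : σ) : svar q < Fintype.card σ := (Fintype.equivFin σ q).isLt

theorem svar_inj {q q' : σ} (h : svar q = svar q') : q = q' := by
  have := Fin.ext (a := Fintype.equivFin σ q) (b := Fintype.equivFin σ q') h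
  exact (Fintype.equivFin σ).injective this

noncomputable def atLeastF (σ : Type) [Fintype σ] : MSO α :=
  bigOr ((Finset.univ : Finset σ).toList.map (fun q => .mem (svar q) 0))

open Classical in
noncomputable def atMostF (σ : Type) [Fintype σ] : MSO α :=
  bigAnd ((Finset.univ : Finset σ).toList.map (fun q =>
    bigAnd ((Finset.univ : Finset σ).toList.map (fun q' =>
      if q = q' then tt else .not (land (.mem (svar q) 0) (.mem (svar q') 0))))))

def firstF : MSO α := .not (.ex1 1 (.lt 1 0))
def lastF : MSO α := .not (.ex1 1 (.lt 0 1))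
def succF : MSO α := land (.lt 0 1) (.not (.ex1 2 (land (.lt 0 2) (.lt 2 1))))

variable (A : DFA α σ)

noncomputable def initF : MSO α :=
  bigOr ((Finset.univ : Finset α).toList.map (fun a =>
    land (.char a 0) (.mem (svar (A.step A.start a)) 0)))

open Classical in
noncomputable def finalF : MSO α :=
  bigOr ((Finset.univ : Finset σ).toList.map (fun q =>
    if q ∈ A.accept then .mem (svar q) 0 else ff))

noncomputable def transF : MSO α :=
  bigOr ((Finset.univ : Finset σ).toList.map (fun q =>
    bigOr ((Finset.univ : Finset α).toList.map (fun a =>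
      land (.mem (svar q) 0) (land (.char a 1) (.mem (svar (A.step q a)) 1))))))

noncomputable def bodyF : MSO α :=
  all1 0 (bigAnd [land (atLeastF σ) (atMostF σ), limp firstF (initF A),
    limp lastF (finalF A), all1 1 (limp succF (transF A))])

noncomputable def phiA : MSO α := ex2Block (List.range (Fintype.card σ)) (bodyF A)

/- ### free variable computations -/

theorem fv1_all1 {x : ℕ} {φ : MSO α} : (all1 x φ).fv1 = φ.fv1 \ {x} := rfl
theorem fv2_all1 {x : ℕ} {φ : MSO α} : (all1 x φ).fv2 = φ.fv2 := rfl

theorem fv1_inner_subset :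
    (bigAnd [land (atLeastF σ) (atMostF σ), limp firstF (initF A),
      limp lastF (finalF A), all1 1 (limp succF (transF A))]).fv1 ⊆ ({0} : Finset ℕ) := by
  classical
  refine fv1_bigAnd_subset ?_
  intro φ hφ
  simp only [List.mem_cons, List.not_mem_nil, or_false] at hφ
  rcases hφ with rfl | rfl | rfl | rfl
  · rw [fv1_land]
    refine Finset.union_subset ?_ ?_
    · refine fv1_bigOr_subset ?_
      intro ψ hψ
      obtain ⟨q, _, rfl⟩ := List.mem_map.mp hψ
      show ({0} : Finset ℕ) ⊆ {0}
      exact Finset.Subset.refl _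
    · refine fv1_bigAnd_subset ?_
      intro ψ hψ
      obtain ⟨q, _, rfl⟩ := List.mem_map.mp hψ
      refine fv1_bigAnd_subset ?_
      intro χ hχ
      obtain ⟨q', _, rfl⟩ := List.mem_map.mp hχ
      split
      · rw [fv1_tt]; exact Finset.empty_subset _
      · show (land (.mem (svar q) 0) (.mem (svar q') 0)).fv1 ⊆ {0}
        rw [fv1_land]
        intro v hv
        simp only [MSO.fv1, Finset.mem_union, Finset.mem_singleton] at hv
        simp only [Finset.mem_singleton]
        tauto
  · rw [fv1_limp]
    refine Finset.union_subset ?_ ?_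
    · intro v hv
      simp only [firstF, MSO.fv1, Finset.mem_sdiff, Finset.mem_insert,
        Finset.mem_singleton] at hv
      simp only [Finset.mem_singleton]
      omega
    · refine fv1_bigOr_subset ?_
      intro ψ hψ
      obtain ⟨a, _, rfl⟩ := List.mem_map.mp hψ
      rw [fv1_land]
      intro v hv
      simp only [MSO.fv1, Finset.mem_union, Finset.mem_singleton] at hv
      simp only [Finset.mem_singleton]
      tauto
  · rw [fv1_limp]
    refine Finset.union_subset ?_ ?_
    · intro v hv
      simp only [lastF, MSO.fv1, Finset.mem_sdiff, Finset.mem_insert,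
        Finset.mem_singleton] at hv
      simp only [Finset.mem_singleton]
      omega
    · refine fv1_bigOr_subset ?_
      intro ψ hψ
      obtain ⟨q, _, rfl⟩ := List.mem_map.mp hψ
      split
      · intro v hv
        simp only [MSO.fv1, Finset.mem_singleton] at hv
        simp [hv]
      · rw [fv1_ff]; exact Finset.empty_subset _
  · have htrans : (transF A).fv1 ⊆ ({0, 1} : Finset ℕ) := by
      refine fv1_bigOr_subset ?_
      intro ψ hψ
      obtain ⟨q, _, rfl⟩ := List.mem_map.mp hψ
      refine fv1_bigOr_subset ?_
      intro χ hχ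
      obtain ⟨a, _, rfl⟩ := List.mem_map.mp hχ
      rw [fv1_land, fv1_land]
      intro u hu
      simp only [MSO.fv1, Finset.mem_union, Finset.mem_singleton] at hu
      simp only [Finset.mem_insert, Finset.mem_singleton]
      tauto
    have hsucc : (succF : MSO α).fv1 ⊆ ({0, 1} : Finset ℕ) := by
      intro u hu
      simp only [succF, land, MSO.fv1, Finset.mem_union, Finset.mem_insert,
        Finset.mem_singleton, Finset.mem_sdiff] at hu
      simp only [Finset.mem_insert, Finset.mem_singleton]
      omega
    intro v hv
    rw [fv1_all1, Finset.mem_sdiff, fv1_limp, Finset.mem_union] at hv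
    obtain ⟨h01, hne1⟩ := hv
    rw [Finset.mem_singleton] at hne1
    simp only [Finset.mem_singleton]
    rcases h01 with h | h
    · have := hsucc h
      simp only [Finset.mem_insert, Finset.mem_singleton] at this
      omega
    · have := htrans h
      simp only [Finset.mem_insert, Finset.mem_singleton] at this
      omega

theorem fv1_phiA : (phiA A).fv1 = ∅ := by
  rw [phiA, fv1_ex2Block, bodyF, fv1_all1]
  rw [Finset.eq_empty_iff_forall_notMem]
  intro v hv
  rw [Finset.mem_sdiff] at hv
  have := fv1_inner_subset A hv.1
  rw [Finset.mem_singleton] at this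
  exact hv.2 (by simp [this])

theorem fv2_inner_subset :
    (bigAnd [land (atLeastF σ) (atMostF σ), limp firstF (initF A),
      limp lastF (finalF A), all1 1 (limp succF (transF A))]).fv2
      ⊆ Finset.range (Fintype.card σ) := by
  classical
  refine fv2_bigAnd_subset ?_
  intro φ hφ
  simp only [List.mem_cons, List.not_mem_nil, or_false] at hφ
  rcases hφ with rfl | rfl | rfl | rfl
  · rw [fv2_land]
    refine Finset.union_subset ?_ ?_
    · refine fv2_bigOr_subset ?_
      intro ψ hψ
      obtain ⟨q, _, rfl⟩ := List.mem_map.mp hψ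
      intro V hV
      simp only [MSO.fv2, Finset.mem_singleton] at hV
      subst hV
      exact Finset.mem_range.mpr (svar_lt q)
    · refine fv2_bigAnd_subset ?_
      intro ψ hψ
      obtain ⟨q, _, rfl⟩ := List.mem_map.mp hψ
      refine fv2_bigAnd_subset ?_
      intro χ hχ
      obtain ⟨q', _, rfl⟩ := List.mem_map.mp hχ
      split
      · rw [fv2_tt]; exact Finset.empty_subset _
      · show (land (.mem (svar q) 0) (.mem (svar q') 0)).fv2 ⊆ _
        rw [fv2_land]
        intro V hV
        simp only [MSO.fv2, Finset.mem_union, Finset.mem_singleton] at hV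
        rcases hV with rfl | rfl
        · exact Finset.mem_range.mpr (svar_lt q)
        · exact Finset.mem_range.mpr (svar_lt q')
  · rw [fv2_limp]
    refine Finset.union_subset ?_ ?_
    · intro V hV
      simp only [firstF, MSO.fv2] at hV
      exact absurd hV (Finset.notMem_empty V)
    · refine fv2_bigOr_subset ?_
      intro ψ hψ
      obtain ⟨a, _, rfl⟩ := List.mem_map.mp hψ
      rw [fv2_land]
      intro V hV
      simp only [MSO.fv2, Finset.mem_union, Finset.mem_singleton,
        Finset.notMem_empty, false_or] at hV
      subst hV
      exact Finset.mem_range.mpr (svar_lt _)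
  · rw [fv2_limp]
    refine Finset.union_subset ?_ ?_
    · intro V hV
      simp only [lastF, MSO.fv2] at hV
      exact absurd hV (Finset.notMem_empty V)
    · refine fv2_bigOr_subset ?_
      intro ψ hψ
      obtain ⟨q, _, rfl⟩ := List.mem_map.mp hψ
      split
      · intro V hV
        simp only [MSO.fv2, Finset.mem_singleton] at hV
        subst hV
        exact Finset.mem_range.mpr (svar_lt q)
      · rw [fv2_ff]; exact Finset.empty_subset _
  · intro V hV
    rw [fv2_all1, fv2_limp] at hV
    rcases Finset.mem_union.mp hV with h | h
    · simp only [succF, land, MSO.fv2, Finset.mem_union,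
        Finset.notMem_empty, or_self] at h
    · have : (transF A).fv2 ⊆ Finset.range (Fintype.card σ) := by
        refine fv2_bigOr_subset ?_
        intro ψ hψ
        obtain ⟨q, _, rfl⟩ := List.mem_map.mp hψ
        refine fv2_bigOr_subset ?_
        intro χ hχ
        obtain ⟨a, _, rfl⟩ := List.mem_map.mp hχ
        rw [fv2_land, fv2_land]
        intro U hU
        simp only [MSO.fv2, Finset.mem_union, Finset.mem_singleton,
          Finset.notMem_empty, false_or] at hU
        rcases hU with rfl | rfl
        · exact Finset.mem_range.mpr (svar_lt q)
        · exact Finset.mem_range.mpr (svar_lt _)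
      exact this h

theorem fv2_phiA : (phiA A).fv2 = ∅ := by
  rw [Finset.eq_empty_iff_forall_notMem]
  intro V hV
  rw [phiA] at hV
  rw [mem_fv2_ex2Block] at hV
  obtain ⟨h1, h2⟩ := hV
  apply h2
  rw [List.mem_range]
  rw [bodyF, fv2_all1] at h1
  exact Finset.mem_range.mp (fv2_inner_subset A h1)

end Forward
end BET
namespace BET
open MSO

section Semantics
variable {α : Type} [Fintype α] {σ : Type} [Fintype σ] (A : DFA α σ)

theorem Sat_ex1' {w : List α} {ν₁ : ℕ → ℕ} {ν₂ : ℕ → Set ℕ} {x : ℕ} {φ : MSO α} :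
    Sat w ν₁ ν₂ (.ex1 x φ) ↔ ∃ i < w.length, Sat w (Function.update ν₁ x i) ν₂ φ := Iff.rfl

theorem Sat_mem' {w : List α} {ν₁ : ℕ → ℕ} {ν₂ : ℕ → Set ℕ} {X x : ℕ} :
    Sat w ν₁ ν₂ (.mem X x) ↔ ν₁ x ∈ ν₂ X := Iff.rfl

theorem Sat_char' {w : List α} {ν₁ : ℕ → ℕ} {ν₂ : ℕ → Set ℕ} {a : α} {x : ℕ} :
    Sat w ν₁ ν₂ (.char a x) ↔ w[ν₁ x]? = some a := Iff.rfl

theorem Sat_lt' {w : List α} {ν₁ : ℕ → ℕ} {ν₂ : ℕ → Set ℕ} {x y : ℕ} :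
    Sat w ν₁ ν₂ (.lt x y) ↔ ν₁ x < ν₁ y := Iff.rfl

theorem Sat_firstF {w : List α} {ν₁ : ℕ → ℕ} {ν₂ : ℕ → Set ℕ} :
    Sat w ν₁ ν₂ (firstF : MSO α) ↔ ¬ ∃ j < w.length, j < ν₁ 0 := by
  rw [firstF, Sat_not, Sat_ex1']
  apply not_congr
  apply exists_congr; intro j
  apply and_congr_right; intro hj
  rw [Sat_lt', Function.update_self, Function.update_of_ne (by decide : (0:ℕ) ≠ 1)]

theorem Sat_lastF {w : List α} {ν₁ : ℕ → ℕ} {ν₂ : ℕ → Set ℕ} :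
    Sat w ν₁ ν₂ (lastF : MSO α) ↔ ¬ ∃ j < w.length, ν₁ 0 < j := by
  rw [lastF, Sat_not, Sat_ex1']
  apply not_congr
  apply exists_congr; intro j
  apply and_congr_right; intro hj
  rw [Sat_lt', Function.update_self, Function.update_of_ne (by decide : (0:ℕ) ≠ 1)]

theorem Sat_succF {w : List α} {ν₁ : ℕ → ℕ} {ν₂ : ℕ → Set ℕ} :
    Sat w ν₁ ν₂ (succF : MSO α) ↔
      (ν₁ 0 < ν₁ 1 ∧ ¬ ∃ m < w.length, ν₁ 0 < m ∧ m < ν₁ 1) := by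
  rw [succF, Sat_land, Sat_lt', Sat_not, Sat_ex1']
  apply and_congr_right; intro h
  apply not_congr
  apply exists_congr; intro m
  apply and_congr_right; intro hm
  rw [Sat_land, Sat_lt', Sat_lt', Function.update_self,
    Function.update_of_ne (by decide : (0:ℕ) ≠ 2),
    Function.update_of_ne (by decide : (1:ℕ) ≠ 2)]

/-- The run of the DFA: state after reading the first `i+1` letters. -/
noncomputable def stA (w : List α) (i : ℕ) : σ := A.evalFrom A.start (w.take (i+1))

theorem take_succ_eq {w : List α} {i : ℕ} (hi : i < w.length) :
    w.take (i+1) = w.take i ++ [w[i]'hi] := by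
  rw [List.take_succ, List.getElem?_eq_getElem hi]
  rfl

theorem stA_zero {w : List α} (hw : 0 < w.length) :
    stA A w 0 = A.step A.start (w[0]'hw) := by
  rw [stA, take_succ_eq hw, List.take_zero, List.nil_append, DFA.evalFrom_singleton]

theorem stA_succ {w : List α} {i : ℕ} (hi : i + 1 < w.length) :
    stA A w (i+1) = A.step (stA A w i) (w[i+1]'hi) := by
  rw [stA, take_succ_eq hi, DFA.evalFrom_append_singleton]
  rfl

theorem stA_last {w : List α} (hw : w ≠ []) :
    stA A w (w.length - 1) = A.evalFrom A.start w := by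
  rw [stA]
  congr 1
  have h : w.length - 1 + 1 = w.length :=
    Nat.succ_pred_eq_of_pos (List.length_pos_iff.mpr hw)
  rw [h, List.take_length]

theorem sat_phiA_iff {w : List α} (hw : w ≠ []) :
    Sat w (fun _ => 0) (fun _ => ∅) (phiA A) ↔ w ∈ A.accepts := by
  classical
  have hlen : 0 < w.length := List.length_pos_iff.mpr hw
  rw [phiA, Sat_ex2Block]
  constructor
  · -- Sat → accepts
    rintro ⟨g, hgb, hsat⟩
    set μ₂ : ℕ → Set ℕ :=
      fun V => if V ∈ List.range (Fintype.card σ) then g V else (fun _ => (∅ : Set ℕ)) V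
      with hμ₂
    rw [bodyF, Sat_all1] at hsat
    -- partition: at each position a unique state variable holds
    have hpart : ∀ i, i < w.length → ∃ q : σ, i ∈ μ₂ (svar q) ∧
        ∀ q' : σ, i ∈ μ₂ (svar q') → q' = q := by
      intro i hi
      have h := hsat i hi
      rw [Sat_bigAnd] at h
      have h1 := h _ (List.mem_cons_self)
      rw [Sat_land] at h1
      obtain ⟨hal, ham⟩ := h1
      rw [atLeastF, Sat_bigOr] at hal
      obtain ⟨ψ, hψ, hsatψ⟩ := hal
      obtain ⟨q, _, rfl⟩ := List.mem_map.mp hψ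
      rw [Sat_mem', Function.update_self] at hsatψ
      refine ⟨q, hsatψ, ?_⟩
      intro q' hq'
      by_contra hne
      rw [atMostF, Sat_bigAnd] at ham
      have h2 := ham _ (List.mem_map_of_mem (Finset.mem_toList.mpr (Finset.mem_univ q')))
      rw [Sat_bigAnd] at h2
      have h3 := h2 _ (List.mem_map_of_mem (Finset.mem_toList.mpr (Finset.mem_univ q)))
      rw [if_neg hne, Sat_not, Sat_land] at h3
      apply h3
      constructor
      · rw [Sat_mem', Function.update_self]
        exact hq'
      · rw [Sat_mem', Function.update_self]
        exact hsatψ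
    -- the run is marked
    have hkey : ∀ i, i < w.length → i ∈ μ₂ (svar (stA A w i)) := by
      intro i
      induction i with
      | zero =>
        intro hi
        have h := hsat 0 hlen
        rw [Sat_bigAnd] at h
        have h2 := h _ (List.mem_cons_of_mem _ (List.mem_cons_self))
        rw [Sat_limp] at h2
        have hfirst : Sat w (Function.update (fun _ => 0) 0 0) μ₂ (firstF : MSO α) := by
          rw [Sat_firstF, Function.update_self]
          rintro ⟨j, _, hj⟩
          omega
        have hinit := h2 hfirst
        rw [initF, Sat_bigOr] at hinit
        obtain ⟨ψ, hψ, hs⟩ := hinit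
        obtain ⟨a, _, rfl⟩ := List.mem_map.mp hψ
        rw [Sat_land, Sat_char', Sat_mem', Function.update_self] at hs
        obtain ⟨hchar, hmem⟩ := hs
        have ha : w[0]'hlen = a := by
          rw [List.getElem?_eq_getElem hlen] at hchar
          injection hchar
        rw [stA_zero A hlen, ha]
        exact hmem
      | succ i IH =>
        intro hi1
        have hi : i < w.length := by omega
        have hIH := IH hi
        have h := hsat i hi
        rw [Sat_bigAnd] at h
        have h4 := h _ (List.mem_cons_of_mem _ (List.mem_cons_of_mem _
          (List.mem_cons_of_mem _ (List.mem_cons_self))))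
        rw [Sat_all1] at h4
        have h5 := h4 (i+1) hi1
        rw [Sat_limp] at h5
        have hsucc : Sat w (Function.update (Function.update (fun _ => 0) 0 i) 1 (i+1)) μ₂
            (succF : MSO α) := by
          rw [Sat_succF, Function.update_self,
            Function.update_of_ne (by decide : (0:ℕ) ≠ 1), Function.update_self]
          refine ⟨by omega, ?_⟩
          rintro ⟨m, _, hm1, hm2⟩
          omega
        have htrans := h5 hsucc
        rw [transF, Sat_bigOr] at htrans
        obtain ⟨ψ, hψ, hs⟩ := htrans
        obtain ⟨q, _, rfl⟩ := List.mem_map.mp hψ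
        rw [Sat_bigOr] at hs
        obtain ⟨χ, hχ, hs2⟩ := hs
        obtain ⟨a, _, rfl⟩ := List.mem_map.mp hχ
        rw [Sat_land, Sat_land, Sat_mem', Sat_char', Sat_mem'] at hs2
        obtain ⟨hq, hchar, hstep⟩ := hs2
        rw [Function.update_of_ne (by decide : (0:ℕ) ≠ 1), Function.update_self] at hq
        rw [Function.update_self] at hchar hstep
        -- identify q with the run state
        obtain ⟨q0, hq0, huniq⟩ := hpart i hi
        have hqq : q = stA A w i := by
          have e1 := huniq q hq
          have e2 := huniq (stA A w i) hIH
          rw [e1, e2]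
        have ha : w[i+1]'hi1 = a := by
          rw [List.getElem?_eq_getElem hi1] at hchar
          injection hchar
        rw [stA_succ A hi1, ha, ← hqq]
        exact hstep
    -- conclude acceptance from the last position
    have hlast := hsat (w.length - 1) (by omega)
    rw [Sat_bigAnd] at hlast
    have h3 := hlast _ (List.mem_cons_of_mem _ (List.mem_cons_of_mem _
      (List.mem_cons_self)))
    rw [Sat_limp] at h3
    have hl : Sat w (Function.update (fun _ => 0) 0 (w.length - 1)) μ₂ (lastF : MSO α) := by
      rw [Sat_lastF, Function.update_self]
      rintro ⟨j, hj, hj2⟩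
      omega
    have hfin := h3 hl
    rw [finalF, Sat_bigOr] at hfin
    obtain ⟨ψ, hψ, hs⟩ := hfin
    obtain ⟨q, _, rfl⟩ := List.mem_map.mp hψ
    by_cases hq : q ∈ A.accept
    · rw [if_pos hq, Sat_mem', Function.update_self] at hs
      obtain ⟨q0, hq0, huniq⟩ := hpart (w.length - 1) (by omega)
      have e1 := huniq q hs
      have e2 := huniq (stA A w (w.length - 1)) (hkey _ (by omega))
      have : stA A w (w.length - 1) = q := by rw [e1, e2]
      rw [DFA.mem_accepts]
      show A.evalFrom A.start w ∈ A.accept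
      rw [← stA_last A hw, this]
      exact hq
    · rw [if_neg hq] at hs
      exact absurd hs Sat_ff
  · -- accepts → Sat
    intro hacc
    refine ⟨fun V => {i | i < w.length ∧
      ∃ h : V < Fintype.card σ, (Fintype.equivFin σ).symm ⟨V, h⟩ = stA A w i}, ?_, ?_⟩
    · intro V _ i hi
      exact hi.1
    · set μ₂ : ℕ → Set ℕ :=
        fun V => if V ∈ List.range (Fintype.card σ) then
          {i | i < w.length ∧ ∃ h : V < Fintype.card σ,
            (Fintype.equivFin σ).symm ⟨V, h⟩ = stA A w i}
          else (fun _ => (∅ : Set ℕ)) V with hμ₂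
      have hkey : ∀ q : σ, μ₂ (svar q) = {i | i < w.length ∧ stA A w i = q} := by
        intro q
        rw [hμ₂]
        simp only
        rw [if_pos (List.mem_range.mpr (svar_lt q))]
        ext i
        simp only [Set.mem_setOf_eq]
        apply and_congr_right; intro hi
        constructor
        · rintro ⟨h, heq⟩
          have hfin : (⟨svar q, h⟩ : Fin (Fintype.card σ)) = Fintype.equivFin σ q :=
            Fin.ext rfl
          rw [hfin, Equiv.symm_apply_apply] at heq
          exact heq.symm
        · intro heq
          refine ⟨svar_lt q, ?_⟩
          have hfin : (⟨svar q, svar_lt q⟩ : Fin (Fintype.card σ)) = Fintype.equivFin σ q :=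
            Fin.ext rfl
          rw [hfin, Equiv.symm_apply_apply, heq]
      rw [bodyF, Sat_all1]
      intro i hi
      rw [Sat_bigAnd]
      intro φ hφ
      simp only [List.mem_cons, List.not_mem_nil, or_false] at hφ
      rcases hφ with rfl | rfl | rfl | rfl
      · rw [Sat_land]
        constructor
        · rw [atLeastF, Sat_bigOr]
          refine ⟨.mem (svar (stA A w i)) 0,
            List.mem_map_of_mem (Finset.mem_toList.mpr (Finset.mem_univ _)), ?_⟩
          rw [Sat_mem', Function.update_self, hkey]
          exact ⟨hi, rfl⟩
        · rw [atMostF, Sat_bigAnd]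
          intro ψ hψ
          obtain ⟨q, _, rfl⟩ := List.mem_map.mp hψ
          rw [Sat_bigAnd]
          intro χ hχ
          obtain ⟨q', _, rfl⟩ := List.mem_map.mp hχ
          split
          · exact Sat_tt
          · rw [Sat_not, Sat_land, Sat_mem', Sat_mem', Function.update_self, hkey, hkey]
            rintro ⟨⟨_, h1⟩, ⟨_, h2⟩⟩
            exact (by assumption : ¬ q = q') (h1.symm.trans h2)
      · rw [Sat_limp]
        intro hfirst
        rw [Sat_firstF, Function.update_self] at hfirst
        have hi0 : i = 0 := by
          by_contra hne
          exact hfirst ⟨0, hlen, by omega⟩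
        subst hi0
        rw [initF, Sat_bigOr]
        refine ⟨land (.char (w[0]'hlen) 0) (.mem (svar (A.step A.start (w[0]'hlen))) 0),
          List.mem_map_of_mem (Finset.mem_toList.mpr (Finset.mem_univ _)), ?_⟩
        rw [Sat_land, Sat_char', Sat_mem', Function.update_self]
        constructor
        · rw [List.getElem?_eq_getElem hlen]
        · rw [hkey]
          exact ⟨hlen, stA_zero A hlen⟩
      · rw [Sat_limp]
        intro hlast
        rw [Sat_lastF, Function.update_self] at hlast
        have hilast : i = w.length - 1 := by
          by_contra hne
          exact hlast ⟨i + 1, by omega, by omega⟩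
        rw [finalF, Sat_bigOr]
        have hq : stA A w i ∈ A.accept := by
          rw [hilast, stA_last A hw]
          exact hacc
        refine ⟨if stA A w i ∈ A.accept then .mem (svar (stA A w i)) 0 else ff,
          List.mem_map_of_mem (Finset.mem_toList.mpr (Finset.mem_univ _)), ?_⟩
        rw [if_pos hq, Sat_mem', Function.update_self, hkey]
        exact ⟨hi, rfl⟩
      · rw [Sat_all1]
        intro j hj
        rw [Sat_limp]
        intro hsucc
        rw [Sat_succF, Function.update_self,
          Function.update_of_ne (by decide : (0:ℕ) ≠ 1), Function.update_self] at hsucc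
        obtain ⟨hij, hnb⟩ := hsucc
        have hji : j = i + 1 := by
          by_contra hne
          exact hnb ⟨i + 1, by omega, by omega, by omega⟩
        subst hji
        rw [transF, Sat_bigOr]
        refine ⟨_, List.mem_map_of_mem
          (f := fun q => bigOr ((Finset.univ : Finset α).toList.map (fun a =>
            land (.mem (svar q) 0) (land (.char a 1) (.mem (svar (A.step q a)) 1)))))
          (Finset.mem_toList.mpr (Finset.mem_univ (stA A w i))), ?_⟩
        rw [Sat_bigOr]
        refine ⟨_, List.mem_map_of_mem
          (Finset.mem_toList.mpr (Finset.mem_univ (w[i+1]'hj))), ?_⟩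
        rw [Sat_land, Sat_land, Sat_mem', Sat_char', Sat_mem']
        rw [Function.update_of_ne (by decide : (0:ℕ) ≠ 1), Function.update_self,
          Function.update_self]
        refine ⟨?_, ?_, ?_⟩
        · rw [hkey]
          exact ⟨hi, rfl⟩
        · rw [List.getElem?_eq_getElem hj]
        · rw [hkey]
          exact ⟨hj, stA_succ A hj⟩

end Semantics
end BET

/-- Büchi–Elgot–Trakhtenbrot: A language `L ⊆ Σ⁺` over a
finite alphabet is regular (accepted by a DFA with finitely many states)
iff there is an MSO sentence `φ` with `L = L(φ)`. -/
theorem regular_iff_mso_definable {α : Type} [Fintype α] (L : Set (List α))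
    (hL : L ⊆ {w : List α | w ≠ []}) :
    (∃ (σ : Type) (_ : Fintype σ) (A : DFA α σ), L = A.accepts) ↔
    (∃ φ : MSO α, φ.fv1 = ∅ ∧ φ.fv2 = ∅ ∧ L = MSO.Lang φ) := by
  constructor
  · rintro ⟨σ, inst, A, rfl⟩
    refine ⟨BET.phiA A, BET.fv1_phiA A, BET.fv2_phiA A, ?_⟩
    ext w
    rw [MSO.Lang, Set.mem_setOf_eq]
    constructor
    · intro hacc
      have hwne : w ≠ [] := hL hacc
      exact ⟨hwne, (BET.sat_phiA_iff A hwne).mpr hacc⟩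
    · rintro ⟨hwne, hsat⟩
      exact (BET.sat_phiA_iff A hwne).mp hsat
  · rintro ⟨φ, _, _, rfl⟩
    exact BET.reg_of_lang φ
end

section
/- The set of MSO-definable languages over a fixed finite alphabet Σ is closed under union, intersection, complementation (relative to Σ⁺), and Kleene star (restricted to nonempty strings). -/
namespace MSO

open Function

variable {α : Type}

/-! ### Derived connectives -/

def land (φ ψ : MSO α) : MSO α := .not (.or (.not φ) (.not ψ))
def limp (φ ψ : MSO α) : MSO α := .or (.not φ) ψ
def liff (φ ψ : MSO α) : MSO α := land (limp φ ψ) (limp ψ φ)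
def lall (x : ℕ) (φ : MSO α) : MSO α := .not (.ex1 x (.not φ))

@[simp] lemma sat_land {w : List α} {ν₁ ν₂ φ ψ} :
    Sat w ν₁ ν₂ (land φ ψ) ↔ Sat w ν₁ ν₂ φ ∧ Sat w ν₁ ν₂ ψ := by
  simp [land, Sat]

@[simp] lemma sat_limp {w : List α} {ν₁ ν₂ φ ψ} :
    Sat w ν₁ ν₂ (limp φ ψ) ↔ (Sat w ν₁ ν₂ φ → Sat w ν₁ ν₂ ψ) := by
  simp [limp, Sat]; tauto

@[simp] lemma sat_liff {w : List α} {ν₁ ν₂ φ ψ} :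
    Sat w ν₁ ν₂ (liff φ ψ) ↔ (Sat w ν₁ ν₂ φ ↔ Sat w ν₁ ν₂ ψ) := by
  simp [liff]; tauto

@[simp] lemma sat_lall {w : List α} {ν₁ ν₂ x φ} :
    Sat w ν₁ ν₂ (lall x φ) ↔ ∀ i < w.length, Sat w (Function.update ν₁ x i) ν₂ φ := by
  simp [lall, Sat]

@[simp] lemma fv1_land {φ ψ : MSO α} : (land φ ψ).fv1 = φ.fv1 ∪ ψ.fv1 := by simp [land, fv1]
@[simp] lemma fv1_limp {φ ψ : MSO α} : (limp φ ψ).fv1 = φ.fv1 ∪ ψ.fv1 := by simp [limp, fv1]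
@[simp] lemma fv1_liff {φ ψ : MSO α} : (liff φ ψ).fv1 = φ.fv1 ∪ ψ.fv1 := by
  simp [liff, Finset.union_comm, Finset.union_assoc, Finset.union_left_comm]
@[simp] lemma fv1_lall {x : ℕ} {φ : MSO α} : (lall x φ).fv1 = φ.fv1 \ {x} := by simp [lall, fv1]
@[simp] lemma fv2_land {φ ψ : MSO α} : (land φ ψ).fv2 = φ.fv2 ∪ ψ.fv2 := by simp [land, fv2]
@[simp] lemma fv2_limp {φ ψ : MSO α} : (limp φ ψ).fv2 = φ.fv2 ∪ ψ.fv2 := by simp [limp, fv2]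
@[simp] lemma fv2_liff {φ ψ : MSO α} : (liff φ ψ).fv2 = φ.fv2 ∪ ψ.fv2 := by
  simp [liff, Finset.union_comm, Finset.union_assoc, Finset.union_left_comm]
@[simp] lemma fv2_lall {x : ℕ} {φ : MSO α} : (lall x φ).fv2 = φ.fv2 := by simp [lall, fv2]

/-! ### Relativization -/

/-- All second-order variables occurring (free or bound) in a formula. -/
def vars2 : MSO α → Finset ℕ
  | .char _ _ => ∅
  | .mem X _ => {X}
  | .lt _ _ => ∅
  | .not φ => vars2 φ
  | .or φ ψ => vars2 φ ∪ vars2 ψ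
  | .ex1 _ φ => vars2 φ
  | .ex2 X φ => insert X (vars2 φ)

/-- Relativize a formula to the set of positions denoted by variable `Y`. -/
def rel (Y : ℕ) : MSO α → MSO α
  | .char a x => .char a x
  | .mem X x => .mem X x
  | .lt x y => .lt x y
  | .not φ => .not (rel Y φ)
  | .or φ ψ => .or (rel Y φ) (rel Y ψ)
  | .ex1 x φ => .ex1 x (land (.mem Y x) (rel Y φ))
  | .ex2 X φ => .ex2 X (rel Y φ)

lemma fv1_rel (Y : ℕ) (φ : MSO α) : (rel Y φ).fv1 = φ.fv1 := by
  induction φ with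
  | char a x => rfl
  | mem X x => rfl
  | lt x y => rfl
  | not φ ih => simp [rel, fv1, ih]
  | or φ ψ ih1 ih2 => simp [rel, fv1, ih1, ih2]
  | ex1 x φ ih => simp [rel, fv1, ih, Finset.union_sdiff_distrib, Finset.insert_sdiff_of_mem]
  | ex2 X φ ih => simp [rel, fv1, ih]

lemma fv2_rel (Y : ℕ) (φ : MSO α) : (rel Y φ).fv2 ⊆ insert Y φ.fv2 := by
  induction φ with
  | char a x => simp [rel, fv2]
  | mem X x => simp [rel, fv2]
  | lt x y => simp [rel, fv2]
  | not φ ih => simpa [rel, fv2] using ih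
  | or φ ψ ih1 ih2 =>
      simp only [rel, fv2]
      refine Finset.union_subset (ih1.trans ?_) (ih2.trans ?_) <;>
        · intro v hv; simp at hv ⊢; tauto
  | ex1 x φ ih =>
      simp only [rel, fv2, fv2_land]
      refine Finset.union_subset ?_ (ih.trans ?_)
      · intro v hv; simp [fv2] at hv ⊢; tauto
      · exact subset_rfl
  | ex2 X φ ih =>
      simp only [rel, fv2]
      intro v hv
      simp only [Finset.mem_sdiff, Finset.mem_singleton] at hv
      have := ih hv.1
      simp only [Finset.mem_insert, Finset.mem_sdiff, Finset.mem_singleton] at this ⊢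
      tauto

/-- Key relativization lemma: satisfaction over a slice of `w` corresponds to
satisfaction of the relativized formula over `w`. -/
lemma sat_rel {w : List α} {b e : ℕ} (he : e ≤ w.length) (Y : ℕ) :
    ∀ (φ : MSO α) (ν₁ μ₁ : ℕ → ℕ) (ν₂ μ₂ : ℕ → Set ℕ),
    Y ∉ vars2 φ →
    (∀ x ∈ fv1 φ, ν₁ x < e - b ∧ μ₁ x = b + ν₁ x) →
    (∀ X ∈ fv2 φ, ∀ i < e - b, (i ∈ ν₂ X ↔ b + i ∈ μ₂ X)) →
    μ₂ Y = Set.Ico b e →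
    (Sat ((w.drop b).take (e - b)) ν₁ ν₂ φ ↔ Sat w μ₁ μ₂ (rel Y φ)) := by
  have hlen : ((w.drop b).take (e - b)).length = e - b := by
    simp [List.length_take, List.length_drop]; omega
  intro φ
  induction φ with
  | char a x =>
      intro ν₁ μ₁ ν₂ μ₂ hY h1 h2 hμY
      obtain ⟨hx, hx'⟩ := h1 x (by simp [fv1])
      simp only [Sat, rel]
      rw [hx', List.getElem?_take, if_pos hx, List.getElem?_drop]
  | mem X x =>
      intro ν₁ μ₁ ν₂ μ₂ hY h1 h2 hμY
      obtain ⟨hx, hx'⟩ := h1 x (by simp [fv1])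
      have := h2 X (by simp [fv2]) (ν₁ x) hx
      simp only [Sat, rel, hx']
      exact this
  | lt x y =>
      intro ν₁ μ₁ ν₂ μ₂ hY h1 h2 hμY
      obtain ⟨hx, hx'⟩ := h1 x (by simp [fv1])
      obtain ⟨hy, hy'⟩ := h1 y (by simp [fv1])
      simp only [Sat, rel, hx', hy']
      omega
  | not φ ih =>
      intro ν₁ μ₁ ν₂ μ₂ hY h1 h2 hμY
      simp only [Sat, rel]
      rw [ih ν₁ μ₁ ν₂ μ₂ hY h1 h2 hμY]
  | or φ ψ ih1 ih2 =>
      intro ν₁ μ₁ ν₂ μ₂ hY h1 h2 hμY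
      simp only [Sat, rel]
      rw [ih1 ν₁ μ₁ ν₂ μ₂ (by simp [vars2] at hY; tauto)
          (fun x hx => h1 x (by simp [fv1]; tauto)) (fun X hX => h2 X (by simp [fv2]; tauto)) hμY,
        ih2 ν₁ μ₁ ν₂ μ₂ (by simp [vars2] at hY; tauto)
          (fun x hx => h1 x (by simp [fv1]; tauto)) (fun X hX => h2 X (by simp [fv2]; tauto)) hμY]
  | ex1 x φ ih =>
      intro ν₁ μ₁ ν₂ μ₂ hY h1 h2 hμY
      simp only [Sat, rel, hlen, sat_land, not_or, not_not]
      constructor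
      · rintro ⟨i, hi, hsat⟩
        refine ⟨b + i, by omega, ?_, ?_⟩
        · simp [Sat, Function.update_self, hμY]; omega
        · rw [← ih (Function.update ν₁ x i) (Function.update μ₁ x (b + i)) ν₂ μ₂
            (by simpa [vars2] using hY) ?_ (fun X hX => h2 X (by simpa [fv2] using hX)) hμY]
          · exact hsat
          · intro y hy
            rcases eq_or_ne y x with rfl | hne
            · simp [Function.update_self]; omega
            · simp only [Function.update_of_ne hne]
              exact h1 y (by simp [fv1]; exact ⟨hy, hne⟩)
      · rintro ⟨j, hj, hmem, hsat⟩
        have hjY : j ∈ Set.Ico b e := by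
          simpa [Sat, hμY, Function.update_self] using hmem
        refine ⟨j - b, by simp at hjY; omega, ?_⟩
        rw [ih (Function.update ν₁ x (j - b)) (Function.update μ₁ x j) ν₂ μ₂
            (by simpa [vars2] using hY) ?_ (fun X hX => h2 X (by simpa [fv2] using hX)) hμY]
        · exact hsat
        · intro y hy
          rcases eq_or_ne y x with rfl | hne
          · simp [Function.update_self]; simp at hjY; omega
          · simp only [Function.update_of_ne hne]
            exact h1 y (by simp [fv1]; exact ⟨hy, hne⟩)
  | ex2 X φ ih =>
      intro ν₁ μ₁ ν₂ μ₂ hY h1 h2 hμY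
      have hXY : X ≠ Y := by simp [vars2] at hY; tauto
      simp only [Sat, rel, hlen]
      constructor
      · rintro ⟨S, hS, hsat⟩
        refine ⟨(b + ·) '' S, ?_, ?_⟩
        · rintro j ⟨i, hi, rfl⟩; have := hS i hi; show b + i < w.length; omega
        · rw [← ih ν₁ μ₁ (Function.update ν₂ X S) (Function.update μ₂ X ((b + ·) '' S))
            (by simp [vars2] at hY; tauto) (fun y hy => h1 y (by simpa [fv1] using hy)) ?_ ?_]
          · exact hsat
          · intro Z hZ i hi
            rcases eq_or_ne Z X with rfl | hne
            · simp only [Function.update_self]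
              constructor
              · exact fun h => ⟨i, h, rfl⟩
              · rintro ⟨i', hi', hii⟩
                have hii' : b + i' = b + i := hii
                have : i' = i := by omega
                exact this ▸ hi'
            · simp only [Function.update_of_ne hne]
              exact h2 Z (by simp [fv2]; exact ⟨hZ, hne⟩) i hi
          · rw [Function.update_of_ne hXY.symm]; exact hμY
      · rintro ⟨S', hS', hsat⟩
        refine ⟨{i | i < e - b ∧ b + i ∈ S'}, fun i hi => hi.1, ?_⟩
        rw [ih ν₁ μ₁ (Function.update ν₂ X {i | i < e - b ∧ b + i ∈ S'})
            (Function.update μ₂ X S')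
            (by simp [vars2] at hY; tauto) (fun y hy => h1 y (by simpa [fv1] using hy)) ?_ ?_]
        · exact hsat
        · intro Z hZ i hi
          rcases eq_or_ne Z X with rfl | hne
          · simp only [Function.update_self]
            simp [Set.mem_setOf_eq, hi]
          · simp only [Function.update_of_ne hne]
            exact h2 Z (by simp [fv2]; exact ⟨hZ, hne⟩) i hi
        · rw [Function.update_of_ne hXY.symm]; exact hμY

/-! ### Unfolding lemmas for `Sat` -/

lemma sat_char {w : List α} {ν₁ ν₂ a x} :
    Sat w ν₁ ν₂ (.char a x) ↔ w[ν₁ x]? = some a := Iff.rfl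
lemma sat_mem {w : List α} {ν₁ ν₂ X x} :
    Sat w ν₁ ν₂ (.mem X x) ↔ ν₁ x ∈ ν₂ X := Iff.rfl
lemma sat_lt {w : List α} {ν₁ ν₂ x y} :
    Sat w ν₁ ν₂ (.lt x y) ↔ ν₁ x < ν₁ y := Iff.rfl
lemma sat_not {w : List α} {ν₁ ν₂} {φ : MSO α} :
    Sat w ν₁ ν₂ (.not φ) ↔ ¬ Sat w ν₁ ν₂ φ := Iff.rfl
lemma sat_or {w : List α} {ν₁ ν₂} {φ ψ : MSO α} :
    Sat w ν₁ ν₂ (.or φ ψ) ↔ Sat w ν₁ ν₂ φ ∨ Sat w ν₁ ν₂ ψ := Iff.rfl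
lemma sat_ex1 {w : List α} {ν₁ ν₂ x} {φ : MSO α} :
    Sat w ν₁ ν₂ (.ex1 x φ) ↔ ∃ i < w.length, Sat w (Function.update ν₁ x i) ν₂ φ := Iff.rfl
lemma sat_ex2 {w : List α} {ν₁ ν₂ X} {φ : MSO α} :
    Sat w ν₁ ν₂ (.ex2 X φ) ↔
      ∃ S : Set ℕ, (∀ i ∈ S, i < w.length) ∧ Sat w ν₁ (Function.update ν₂ X S) φ := Iff.rfl

/-! ### The star sentence -/

/-- "the first position belongs to `X`" -/
def starA (X : ℕ) : MSO α := .ex1 0 (land (.mem X 0) (lall 1 (.not (.lt 1 0))))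

/-- "`Y` is exactly the block of positions from `p` (variable 0) up to the next
element of `X` (or the end of the word)" -/
def starC (X Y : ℕ) : MSO α :=
  lall 2 (liff (.mem Y 2)
    (land (.not (.lt 2 0)) (lall 1 (limp (land (.mem X 1) (.lt 0 1)) (.lt 2 1)))))

/-- "every block starting at an element of `X` satisfies `φ`" -/
def starB (X Y : ℕ) (φ : MSO α) : MSO α :=
  lall 0 (limp (.mem X 0) (.ex2 Y (land (starC X Y) (rel Y φ))))

/-- The MSO sentence defining the Kleene star (on nonempty words) of `Lang φ`. -/
def starF (X Y : ℕ) (φ : MSO α) : MSO α := .ex2 X (land (starA X) (starB X Y φ))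

/-- Clean characterization of satisfaction of `starF`. -/
lemma sat_starF_iff (X Y : ℕ) (φ : MSO α) (hXY : X ≠ Y) (w : List α) :
    Sat w (fun _ => 0) (fun _ => ∅) (starF X Y φ) ↔
    ∃ S : Set ℕ, (∀ i ∈ S, i < w.length) ∧
      (∃ i < w.length, i ∈ S ∧ ∀ j < w.length, ¬ j < i) ∧
      ∀ p < w.length, p ∈ S →
        ∃ T : Set ℕ, (∀ i ∈ T, i < w.length) ∧
          (∀ z < w.length, (z ∈ T ↔ ¬ z < p ∧ ∀ q < w.length, q ∈ S ∧ p < q → z < q)) ∧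
          Sat w (Function.update (fun _ => 0) 0 p)
            (Function.update (Function.update (fun _ => ∅) X S) Y T) (rel Y φ) := by
  simp only [starF, starA, starB, starC, sat_ex1, sat_ex2, sat_land, sat_limp,
    sat_liff, sat_lall, sat_mem, sat_lt, sat_not]
  simp [hXY, Function.update_apply]

/-- Forward direction: a word satisfying `starF` splits into factors in `Lang φ`. -/
lemma starF_forward (X Y : ℕ) (φ : MSO α) (hY : Y ∉ vars2 φ) (hXY : X ≠ Y)
    (h1 : fv1 φ = ∅) (h2 : fv2 φ = ∅) (w : List α) (hw : w ≠ [])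
    (hsat : Sat w (fun _ => 0) (fun _ => ∅) (starF X Y φ)) :
    ∃ l : List (List α), w = l.flatten ∧ ∀ u ∈ l, u ∈ Lang φ := by
  rw [sat_starF_iff X Y φ hXY] at hsat
  obtain ⟨S, hSbnd, ⟨i0, hi0n, hi0S, hi0min⟩, hB⟩ := hsat
  have hn : 0 < w.length := List.length_pos_iff.mpr hw
  have h0S : 0 ∈ S := by
    have := hi0min 0 hn
    have : i0 = 0 := by omega
    rwa [this] at hi0S
  -- the factor of `w` between positions `p` and `e`
  have factor_mem : ∀ p e, p < e → e ≤ w.length → p ∈ S →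
      ∀ T : Set ℕ, T = Set.Ico p e →
      Sat w (Function.update (fun _ => 0) 0 p)
        (Function.update (Function.update (fun _ => ∅) X S) Y T) (rel Y φ) →
      (w.drop p).take (e - p) ∈ Lang φ := by
    intro p e hpe hen hpS T hT hrel
    have hsat' := (sat_rel hen Y φ (fun _ => 0) (Function.update (fun _ => 0) 0 p)
      (fun _ => ∅) (Function.update (Function.update (fun _ => ∅) X S) Y T) hY
      (by simp [h1]) (by simp [h2]) (by rw [Function.update_self, hT])).mpr hrel
    refine ⟨?_, hsat'⟩
    have : ((w.drop p).take (e - p)).length = e - p := by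
      simp [List.length_take, List.length_drop]; omega
    intro hnil
    rw [hnil] at this
    simp at this
    omega
  have key : ∀ m p, w.length - p ≤ m → p ∈ S → p < w.length →
      ∃ l : List (List α), w.drop p = l.flatten ∧ ∀ u ∈ l, u ∈ Lang φ := by
    intro m
    induction m with
    | zero => intro p h hp hpn; omega
    | succ m ih =>
      intro p hm hpS hpn
      obtain ⟨T, hTbnd, hTchar, hTrel⟩ := hB p hpn hpS
      by_cases hnext : ∃ q, q ∈ S ∧ p < q
      · set e := sInf {q | q ∈ S ∧ p < q} with he
        have heT : e ∈ {q | q ∈ S ∧ p < q} := Nat.sInf_mem hnext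
        have heS : e ∈ S := heT.1
        have hpe : p < e := heT.2
        have hen : e < w.length := hSbnd e heS
        have hemin : ∀ q, q ∈ S → p < q → e ≤ q := fun q h1' h2' =>
          Nat.sInf_le ⟨h1', h2'⟩
        have hT : T = Set.Ico p e := by
          ext z
          constructor
          · intro hz
            have hzn := hTbnd z hz
            obtain ⟨hz1, hz2⟩ := (hTchar z hzn).mp hz
            exact ⟨by omega, hz2 e hen ⟨heS, hpe⟩⟩
          · rintro ⟨hz1, hz2⟩
            have hzn : z < w.length := by omega
            refine (hTchar z hzn).mpr ⟨by omega, ?_⟩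
            intro q hq ⟨hqS, hpq⟩
            have := hemin q hqS hpq
            omega
        have hfac := factor_mem p e hpe (le_of_lt hen) hpS T hT hTrel
        obtain ⟨l, hl1, hl2⟩ := ih e (by omega) heS hen
        refine ⟨(w.drop p).take (e - p) :: l, ?_, ?_⟩
        · have : w.drop e = (w.drop p).drop (e - p) := by
            rw [List.drop_drop]
            congr 1
            omega
          rw [show (List.take (e - p) (List.drop p w) :: l).flatten
              = List.take (e - p) (List.drop p w) ++ l.flatten from rfl,
            ← hl1, this, List.take_append_drop]
        · intro u hu
          rcases List.mem_cons.mp hu with rfl | hu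
          · exact hfac
          · exact hl2 u hu
      · push_neg at hnext
        have hT : T = Set.Ico p w.length := by
          ext z
          constructor
          · intro hz
            have hzn := hTbnd z hz
            obtain ⟨hz1, _⟩ := (hTchar z hzn).mp hz
            exact ⟨by omega, hzn⟩
          · rintro ⟨hz1, hz2⟩
            refine (hTchar z hz2).mpr ⟨by omega, ?_⟩
            intro q hq ⟨hqS, hpq⟩
            exact absurd hpq (by simpa using hnext q hqS)
        have hfac := factor_mem p w.length hpn le_rfl hpS T hT hTrel
        refine ⟨[(w.drop p).take (w.length - p)], ?_, ?_⟩
        · have : (w.drop p).take (w.length - p) = w.drop p := by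
            rw [← List.length_drop, List.take_length]
          simp [this]
        · intro u hu
          simp at hu
          exact hu ▸ hfac
  obtain ⟨l, hl1, hl2⟩ := key w.length 0 (by omega) h0S hn
  exact ⟨l, by simpa using hl1, hl2⟩

/-- Backward direction: a concatenation of factors in `Lang φ` satisfies `starF`. -/
lemma starF_backward (X Y : ℕ) (φ : MSO α) (hY : Y ∉ vars2 φ) (hXY : X ≠ Y)
    (h1 : fv1 φ = ∅) (h2 : fv2 φ = ∅) (l : List (List α))
    (hl : ∀ u ∈ l, u ∈ Lang φ) (hw : l.flatten ≠ []) :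
    Sat l.flatten (fun _ => 0) (fun _ => ∅) (starF X Y φ) := by
  set w := l.flatten with hwdef
  set n := w.length with hn
  set k := l.length with hkdef
  set ps : ℕ → ℕ := fun i => ((l.take i).flatten).length with hps
  have hk : 0 < k := by
    rcases l with _ | ⟨u, l'⟩
    · simp [hwdef] at hw
    · simp [hkdef]
  have hps0 : ps 0 = 0 := by simp [hps]
  have hpsk : ps k = n := by simp only [hps, hkdef]; rw [List.take_length]
  have hstep : ∀ i (hi : i < k), ps (i + 1) = ps i + (l[i]'(by omega)).length := by
    intro i hi
    simp only [hps, List.take_succ, List.flatten_append, List.length_append]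
    congr 1
    rw [List.getElem?_eq_getElem (show i < l.length by omega)]
    simp
  have hpos : ∀ i (hi : i < k), 0 < (l[i]'(by omega)).length := by
    intro i hi
    have := (hl (l[i]'(by omega)) (List.getElem_mem _)).1
    exact List.length_pos_iff.mpr this
  have hmono1 : ∀ i', ps i' ≤ ps (i' + 1) := by
    intro i'
    by_cases h : i' < k
    · rw [hstep i' h]; omega
    · simp only [hps]
      rw [List.take_of_length_le (by omega), List.take_of_length_le (by omega)]
  have hmono : ∀ i j, i ≤ j → ps i ≤ ps j := by
    intro i j hij
    induction j with
    | zero => have hi0 : i = 0 := by omega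
              simp [hi0]
    | succ j ihj =>
      rcases Nat.lt_or_ge i (j + 1) with h | h
      · exact (ihj (by omega)).trans (hmono1 j)
      · have hij' : i = j + 1 := by omega
        simp [hij']
  have hstrict : ∀ i j, i < j → j ≤ k → ps i < ps j := by
    intro i j hij hjk
    have h1' : ps i < ps (i + 1) := by
      rw [hstep i (by omega)]
      have := hpos i (by omega)
      omega
    have := hmono (i + 1) j (by omega)
    omega
  rw [sat_starF_iff X Y φ hXY]
  refine ⟨{m | ∃ i, i < k ∧ ps i = m}, ?_, ?_, ?_⟩
  · rintro m ⟨i, hi, rfl⟩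
    calc ps i < ps k := hstrict i k hi le_rfl
    _ = n := hpsk
  · refine ⟨0, by simpa [hn, hwdef] using List.length_pos_iff.mpr hw, ⟨0, hk, hps0⟩, ?_⟩
    intro j _ hj
    omega
  · rintro p hp ⟨i, hik, rfl⟩
    set e := ps (i + 1) with he
    have hpe : ps i < e := hstrict i (i+1) (by omega) (by omega)
    have hen : e ≤ n := hpsk ▸ hmono (i+1) k (by omega)
    refine ⟨Set.Ico (ps i) e, fun z hz => by obtain ⟨_, h⟩ := hz; omega, ?_, ?_⟩
    · intro z hzn
      constructor
      · rintro ⟨hz1, hz2⟩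
        refine ⟨by omega, ?_⟩
        rintro q hq ⟨⟨j, hjk, rfl⟩, hpq⟩
        have hij : i < j := by
          by_contra hc
          have := hmono j i (by omega)
          omega
        have := hmono (i + 1) j (by omega)
        omega
      · rintro ⟨hz1, hz2⟩
        refine ⟨by omega, ?_⟩
        by_cases hik1 : i + 1 < k
        · have := hz2 e (by calc e = ps (i+1) := rfl
              _ < ps k := hstrict (i+1) k hik1 le_rfl
              _ = n := hpsk) ⟨⟨i + 1, hik1, rfl⟩, hpe⟩
          omega
        · have : i + 1 = k := by omega
          rw [he, this, hpsk] at *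
          omega
    · -- the slice between ps i and e is exactly l[i]
      have hslice : (w.drop (ps i)).take (e - ps i) = l[i] := by
        have hw1 : w = (l.take i).flatten ++ (l.drop i).flatten := by
          rw [← List.flatten_append, List.take_append_drop]
        have hdrop : w.drop (ps i) = (l.drop i).flatten := by
          rw [hw1]
          exact List.drop_left
        have hdi : (l.drop i).flatten = l[i] ++ (l.drop (i+1)).flatten := by
          rw [List.drop_eq_getElem_cons hik]
          rfl
        rw [hdrop, hdi, he, hstep i hik]
        have : ps i + l[i].length - ps i = l[i].length := by omega
        rw [this, List.take_left]
      have hmem := hl l[i] (List.getElem_mem hik)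
      refine (sat_rel hen Y φ (fun _ => 0) _ (fun _ => ∅) _ hY
        (by simp [h1]) (by simp [h2]) (by rw [Function.update_self])).mp ?_
      rw [hslice]
      exact hmem.2

/-- The language of `starF` is the Kleene star of `Lang φ` (on nonempty words). -/
lemma lang_starF (X Y : ℕ) (φ : MSO α) (hY : Y ∉ vars2 φ) (hXY : X ≠ Y)
    (h1 : fv1 φ = ∅) (h2 : fv2 φ = ∅) :
    Lang (starF X Y φ) =
      {w | w ∈ @KStar.kstar (Language α) _ (Lang φ) ∧ w ≠ []} := by
  ext w
  simp only [Lang, Set.mem_setOf_eq, Language.mem_kstar]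
  constructor
  · rintro ⟨hw, hsat⟩
    obtain ⟨l, hl1, hl2⟩ := starF_forward X Y φ hY hXY h1 h2 w hw hsat
    exact ⟨⟨l, hl1, hl2⟩, hw⟩
  · rintro ⟨⟨l, rfl, hl⟩, hw⟩
    exact ⟨hw, starF_backward X Y φ hY hXY h1 h2 l hl hw⟩

lemma fv1_starF (X Y : ℕ) (φ : MSO α) (h1 : fv1 φ = ∅) : fv1 (starF X Y φ) = ∅ := by
  simp only [starF, starA, starB, starC, fv1, fv1_land, fv1_limp, fv1_liff, fv1_lall,
    fv1_rel, h1]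
  ext v
  simp only [Finset.mem_union, Finset.mem_sdiff, Finset.mem_singleton, Finset.mem_insert,
    Finset.notMem_empty, Finset.union_empty, Finset.empty_union]
  simp only [iff_false]
  omega

lemma fv2_starF (X Y : ℕ) (φ : MSO α) (hXY : X ≠ Y) (h2 : fv2 φ = ∅) :
    fv2 (starF X Y φ) = ∅ := by
  have hrel : fv2 (rel Y φ) ⊆ {Y} := by
    have := fv2_rel Y φ
    rw [h2] at this
    simpa using this
  rw [Finset.eq_empty_iff_forall_notMem]
  intro v hv
  simp only [starF, starA, starB, starC, fv2, fv2_land, fv2_limp, fv2_liff, fv2_lall,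
    Finset.mem_sdiff, Finset.mem_union, Finset.mem_singleton, Finset.notMem_empty,
    Finset.union_empty, Finset.empty_union] at hv
  have hv' : v ∈ (rel Y φ).fv2 → v = Y := fun h => Finset.mem_singleton.mp (hrel h)
  tauto

lemma definable_star {L : Set (List α)} (hL : Definable L) :
    Definable {w | w ∈ @KStar.kstar (Language α) _ L ∧ w ≠ []} := by
  obtain ⟨φ, h1, h2, rfl⟩ := hL
  set X := (vars2 φ).sup id + 1 with hX
  set Y := X + 1 with hYdef
  have hY : Y ∉ vars2 φ := by
    intro h
    have := Finset.le_sup (f := id) h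
    simp only [id] at this
    omega
  have hXY : X ≠ Y := by omega
  exact ⟨starF X Y φ, fv1_starF X Y φ h1, fv2_starF X Y φ hXY h2,
    (lang_starF X Y φ hY hXY h1 h2).symm⟩

end MSO

/-- MSO-definable languages over a fixed finite alphabet are
closed under union, intersection, complementation relative to `Σ⁺`, and
Kleene star restricted to nonempty strings. -/
theorem mso_definable_closure {α : Type} [Fintype α] (L L₁ L₂ : Set (List α))
    (hL : MSO.Definable L) (hL₁ : MSO.Definable L₁) (hL₂ : MSO.Definable L₂) :
    MSO.Definable (L₁ ∪ L₂) ∧ MSO.Definable (L₁ ∩ L₂) ∧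
    MSO.Definable ({w : List α | w ≠ []} \ L) ∧
    MSO.Definable {w | w ∈ @KStar.kstar (Language α) _ L ∧ w ≠ []} := by
  obtain ⟨φ, hφ1, hφ2, rfl⟩ := hL
  obtain ⟨ψ₁, hψ₁1, hψ₁2, rfl⟩ := hL₁
  obtain ⟨ψ₂, hψ₂1, hψ₂2, rfl⟩ := hL₂
  refine ⟨⟨ψ₁.or ψ₂, ?_, ?_, ?_⟩, ⟨MSO.land ψ₁ ψ₂, ?_, ?_, ?_⟩,
    ⟨φ.not, ?_, ?_, ?_⟩, MSO.definable_star ⟨φ, hφ1, hφ2, rfl⟩⟩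
  · simp [MSO.fv1, hψ₁1, hψ₂1]
  · simp [MSO.fv2, hψ₁2, hψ₂2]
  · ext w; simp only [MSO.Lang, Set.mem_union, Set.mem_setOf_eq, MSO.sat_or]; tauto
  · simp [hψ₁1, hψ₂1]
  · simp [hψ₁2, hψ₂2]
  · ext w; simp only [MSO.Lang, Set.mem_inter_iff, Set.mem_setOf_eq, MSO.sat_land]; tauto
  · simp [MSO.fv1, hφ1]
  · simp [MSO.fv2, hφ2]
  · ext w; simp only [MSO.Lang, Set.mem_diff, Set.mem_setOf_eq, MSO.sat_not]; tauto
end
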